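/- arXiv:2403.06920 — 4 statements merged into one kernel-verified Lean document; each statement's English description precedes it below -/
import Mathlib

section
/- Let (u(k))_{k≥0}, (b(k))_{k≥0}, (q(k))_{k≥0} be real sequences such that 0 < b(k) ≤ 1 and q(k) > 0 for all k, ∑_{k=0}^∞ b(k) = ∞, lim_{k→∞} q(k)/b(k) = 0, and u(k+1) ≤ (1 − b(k))u(k) + q(k) for all k ≥ 0. Then limsup_{k→∞} u(k) ≤ 0. In particular, if u(k) ≥ 0 for all k ≥ 0, then lim_{k→∞} u(k) = 0. -/
open Filter

/-- Lemma 3 (Polyak): a real sequence satisfying the recursive inequality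
`u (k+1) ≤ (1 - b k) * u k + q k` with `0 < b k ≤ 1`, `q k > 0`, divergent `∑ b k`
and `q k / b k → 0` has `limsup u ≤ 0`; if moreover `u k ≥ 0` for all `k`,
then `u → 0`. -/
theorem sequence_convergence_lemma (u b q : ℕ → ℝ)
    (hb_pos : ∀ k, 0 < b k) (hb_le : ∀ k, b k ≤ 1) (hq_pos : ∀ k, 0 < q k)
    (hb_div : Tendsto (fun n => ∑ k ∈ Finset.range n, b k) atTop atTop)
    (hqb : Tendsto (fun k => q k / b k) atTop (nhds 0))
    (hrec : ∀ k, u (k + 1) ≤ (1 - b k) * u k + q k) :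
    limsup u atTop ≤ 0 ∧ ((∀ k, 0 ≤ u k) → Tendsto u atTop (nhds 0)) := by
  have key : ∀ ε : ℝ, 0 < ε → ∃ N, ∀ k ≥ N, u k ≤ ε := by
    intro ε hε
    obtain ⟨N, hN⟩ := Metric.tendsto_atTop.mp hqb (ε / 2) (by positivity)
    have hq' : ∀ k ≥ N, q k ≤ (ε / 2) * b k := by
      intro k hk
      have h1 := hN k hk
      rw [Real.dist_eq, sub_zero] at h1
      have h2 : q k / b k < ε / 2 := lt_of_abs_lt h1
      have hb := hb_pos k
      calc q k = (q k / b k) * b k := by field_simp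
        _ ≤ (ε / 2) * b k := by nlinarith
    set w : ℕ → ℝ := fun k => max (u k - ε / 2) 0 with hw
    have hw_nonneg : ∀ k, 0 ≤ w k := fun k => le_max_right _ _
    have hw_step : ∀ k, N ≤ k → w (k + 1) ≤ (1 - b k) * w k := by
      intro k hk
      have h1 : u (k + 1) - ε / 2 ≤ (1 - b k) * (u k - ε / 2) := by
        have := hrec k; have := hq' k hk; nlinarith [hb_pos k, hb_le k]
      have h2 : (1 - b k) * (u k - ε / 2) ≤ (1 - b k) * w k :=
        mul_le_mul_of_nonneg_left (le_max_left _ _) (by linarith [hb_le k])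
      have h3 : (0 : ℝ) ≤ (1 - b k) * w k :=
        mul_nonneg (by linarith [hb_le k]) (hw_nonneg k)
      simp only [hw]
      exact max_le (le_trans h1 h2) h3
    have hw_prod : ∀ m, w (N + m) ≤ w N * ∏ j ∈ Finset.range m, (1 - b (N + j)) := by
      intro m
      induction m with
      | zero => simp
      | succ m ih =>
        have hstep := hw_step (N + m) (Nat.le_add_right _ _)
        calc w (N + (m + 1)) = w ((N + m) + 1) := by ring_nf
          _ ≤ (1 - b (N + m)) * w (N + m) := hstep
          _ ≤ (1 - b (N + m)) * (w N * ∏ j ∈ Finset.range m, (1 - b (N + j))) :=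
            mul_le_mul_of_nonneg_left ih (by linarith [hb_le (N + m)])
          _ = w N * ∏ j ∈ Finset.range (m + 1), (1 - b (N + j)) := by
            rw [Finset.prod_range_succ]; ring
    have hprod_le : ∀ m, ∏ j ∈ Finset.range m, (1 - b (N + j)) ≤
        Real.exp (-(∑ j ∈ Finset.range m, b (N + j))) := by
      intro m
      have h1 : ∏ j ∈ Finset.range m, (1 - b (N + j)) ≤
          ∏ j ∈ Finset.range m, Real.exp (-(b (N + j))) := by
        apply Finset.prod_le_prod
        · intro i _; linarith [hb_le (N + i)]
        · intro i _
          have := Real.add_one_le_exp (-(b (N + i)))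
          linarith
      calc ∏ j ∈ Finset.range m, (1 - b (N + j))
          ≤ ∏ j ∈ Finset.range m, Real.exp (-(b (N + j))) := h1
        _ = Real.exp (∑ j ∈ Finset.range m, -(b (N + j))) := (Real.exp_sum _ _).symm
        _ = Real.exp (-(∑ j ∈ Finset.range m, b (N + j))) := by rw [Finset.sum_neg_distrib]
    have hsum_tendsto : Tendsto (fun m => ∑ j ∈ Finset.range m, b (N + j)) atTop atTop := by
      have heq : ∀ m, ∑ j ∈ Finset.range m, b (N + j) =
          (∑ k ∈ Finset.range (N + m), b k) - ∑ k ∈ Finset.range N, b k := by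
        intro m
        rw [Finset.sum_range_add]
        ring
      have h1 : Tendsto (fun m => ∑ k ∈ Finset.range (N + m), b k) atTop atTop := by
        have := hb_div.comp (tendsto_add_atTop_nat N)
        refine this.congr fun m => ?_
        simp only [Function.comp_apply]
        rw [Nat.add_comm]
      have h2 := tendsto_atTop_add_const_right atTop (-(∑ k ∈ Finset.range N, b k)) h1
      refine h2.congr (fun m => ?_)
      rw [heq m]; ring
    have hexp_tendsto : Tendsto (fun m => Real.exp (-(∑ j ∈ Finset.range m, b (N + j))))
        atTop (nhds 0) :=
      Real.tendsto_exp_atBot.comp (tendsto_neg_atTop_atBot.comp hsum_tendsto)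
    have hmul_tendsto : Tendsto
        (fun m => w N * Real.exp (-(∑ j ∈ Finset.range m, b (N + j)))) atTop (nhds 0) := by
      have := hexp_tendsto.const_mul (w N)
      simpa using this
    have hw_tendsto : Tendsto (fun m => w (N + m)) atTop (nhds 0) := by
      apply squeeze_zero (fun m => hw_nonneg (N + m)) _ hmul_tendsto
      intro m
      calc w (N + m) ≤ w N * ∏ j ∈ Finset.range m, (1 - b (N + j)) := hw_prod m
        _ ≤ w N * Real.exp (-(∑ j ∈ Finset.range m, b (N + j))) :=
          mul_le_mul_of_nonneg_left (hprod_le m) (hw_nonneg N)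
    obtain ⟨M, hM⟩ := Metric.tendsto_atTop.mp hw_tendsto (ε / 2) (by positivity)
    refine ⟨N + M, fun k hk => ?_⟩
    have hkN : N ≤ k := le_trans (Nat.le_add_right _ _) hk
    have hm : M ≤ k - N := by omega
    have hkeq : N + (k - N) = k := by omega
    have := hM (k - N) hm
    rw [Real.dist_eq, sub_zero, hkeq] at this
    have hwk : w k < ε / 2 := lt_of_abs_lt this
    have : u k - ε / 2 ≤ w k := le_max_left _ _
    linarith
  have hlimsup : limsup u atTop ≤ 0 := by
    rw [Filter.limsup_eq]
    by_cases hbdd : BddBelow {a | ∀ᶠ n in atTop, u n ≤ a}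
    · apply le_of_forall_pos_le_add
      intro ε hε
      have hmem : ε ∈ {a | ∀ᶠ n in atTop, u n ≤ a} := by
        obtain ⟨N, hN⟩ := key ε hε
        exact eventually_atTop.mpr ⟨N, hN⟩
      have := csInf_le hbdd hmem
      linarith
    · rw [Real.sInf_of_not_bddBelow hbdd]
  refine ⟨hlimsup, fun hu_nonneg => ?_⟩
  rw [Metric.tendsto_atTop]
  intro ε hε
  obtain ⟨N, hN⟩ := key (ε / 2) (by positivity)
  refine ⟨N, fun n hn => ?_⟩
  rw [Real.dist_eq, sub_zero, abs_of_nonneg (hu_nonneg n)]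
  have := hN n hn
  linarith
end

section
/- Under the stated setting, for every k ≥ 0, E[V(k+1)] ≤ (1 − 2α(k)λ + α(k)²‖L̄‖²) E[V(k)] + α(k)² ‖I_N − J‖² M, where ‖·‖ applied to matrices denotes the spectral norm. -/
open MeasureTheory Filter Matrix

/-- The spectral (operator 2-)norm of a real square matrix. -/
noncomputable def specNorm {N : ℕ} (M : Matrix (Fin N) (Fin N) ℝ) : ℝ :=
  ‖Matrix.toEuclideanCLM (𝕜 := ℝ) M‖

lemma euclid_norm_sq {N : ℕ} (u : Fin N → ℝ) :
    ‖((WithLp.equiv 2 (Fin N → ℝ)).symm u : EuclideanSpace ℝ (Fin N))‖ ^ 2 = ∑ i, (u i) ^ 2 := by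
  rw [EuclideanSpace.norm_eq, Real.sq_sqrt (by positivity)]
  simp [sq_abs]

lemma sq_sum_mulVec_le {N : ℕ} (B : Matrix (Fin N) (Fin N) ℝ) (v : Fin N → ℝ) :
    ∑ i, ((B.mulVec v) i) ^ 2 ≤ (specNorm B) ^ 2 * ∑ i, (v i) ^ 2 := by
  have h1 : ‖((WithLp.equiv 2 (Fin N → ℝ)).symm (B.mulVec v) : EuclideanSpace ℝ (Fin N))‖
      ≤ specNorm B * ‖((WithLp.equiv 2 (Fin N → ℝ)).symm v : EuclideanSpace ℝ (Fin N))‖ := by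
    simp only [WithLp.equiv_symm_apply]
    rw [← Matrix.toEuclideanCLM_toLp]
    exact ContinuousLinearMap.le_opNorm _ _
  have h2 := pow_le_pow_left₀ (norm_nonneg _) h1 2
  rw [mul_pow, euclid_norm_sq, euclid_norm_sq] at h2
  exact h2

lemma contract_ineq {N : ℕ} (L : Matrix (Fin N) (Fin N) ℝ) (lam a : ℝ) (ha : 0 < a)
    (hgap : ∀ v : Fin N → ℝ, (∑ i, v i) = 0 →
      lam * (∑ i, (v i) ^ 2) ≤ v ⬝ᵥ L.mulVec v)
    (u : Fin N → ℝ) (hu : ∑ i, u i = 0) :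
    ∑ i, ((((1 : Matrix (Fin N) (Fin N) ℝ) - a • L).mulVec u) i) ^ 2
      ≤ (1 - 2 * a * lam + a ^ 2 * (specNorm L) ^ 2) * ∑ i, (u i) ^ 2 := by
  have hexp : ∀ i, (((1 : Matrix (Fin N) (Fin N) ℝ) - a • L).mulVec u) i
      = u i - a * ((L.mulVec u) i) := by
    intro i
    rw [Matrix.sub_mulVec, Matrix.one_mulVec]
    simp [Matrix.smul_mulVec]
  have hsum : ∑ i, ((((1 : Matrix (Fin N) (Fin N) ℝ) - a • L).mulVec u) i) ^ 2
      = ∑ i, (u i) ^ 2 - 2 * a * ∑ i, u i * (L.mulVec u) i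
        + a ^ 2 * ∑ i, ((L.mulVec u) i) ^ 2 := by
    rw [Finset.mul_sum, Finset.mul_sum, ← Finset.sum_sub_distrib, ← Finset.sum_add_distrib]
    exact Finset.sum_congr rfl fun i _ => by rw [hexp i]; ring
  have h1 : lam * (∑ i, (u i) ^ 2) ≤ ∑ i, u i * (L.mulVec u) i := by
    simpa [dotProduct] using hgap u hu
  have h2 := sq_sum_mulVec_le L u
  rw [hsum]
  nlinarith [mul_le_mul_of_nonneg_left h1 (by linarith : (0:ℝ) ≤ 2 * a),
    mul_le_mul_of_nonneg_left h2 (sq_nonneg a)]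

lemma JL_zero {N : ℕ} (L : Matrix (Fin N) (Fin N) ℝ) (hLsymm : L.IsSymm)
    (hL1 : L.mulVec (fun _ => (1 : ℝ)) = 0) :
    (Matrix.of fun _ _ => (1 : ℝ) / N) * L = 0 := by
  ext i j
  have h : ∑ k, L j k = 0 := by
    have := congrFun hL1 j
    simpa [Matrix.mulVec, dotProduct] using this
  have hcol : ∑ k, L k j = 0 := by
    rw [← h]
    exact Finset.sum_congr rfl fun k _ => by rw [← hLsymm.apply]
  simp [Matrix.mul_apply, ← Finset.mul_sum, hcol]

lemma LJ_zero {N : ℕ} (L : Matrix (Fin N) (Fin N) ℝ)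
    (hL1 : L.mulVec (fun _ => (1 : ℝ)) = 0) :
    L * (Matrix.of fun _ _ => (1 : ℝ) / N) = 0 := by
  ext i j
  have h : ∑ k, L i k = 0 := by
    have := congrFun hL1 i
    simpa [Matrix.mulVec, dotProduct] using this
  simp [Matrix.mul_apply, ← Finset.sum_mul, h]

lemma P_comm {N : ℕ} (L : Matrix (Fin N) (Fin N) ℝ) (hLsymm : L.IsSymm)
    (hL1 : L.mulVec (fun _ => (1 : ℝ)) = 0) (a : ℝ) :
    ((1 : Matrix (Fin N) (Fin N) ℝ) - Matrix.of fun _ _ => (1 : ℝ) / N)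
        * ((1 : Matrix (Fin N) (Fin N) ℝ) - a • L)
      = ((1 : Matrix (Fin N) (Fin N) ℝ) - a • L)
        * ((1 : Matrix (Fin N) (Fin N) ℝ) - Matrix.of fun _ _ => (1 : ℝ) / N) := by
  simp only [Matrix.sub_mul, Matrix.mul_sub, Matrix.mul_smul, Matrix.smul_mul,
    JL_zero L hLsymm hL1, LJ_zero L hL1, Matrix.one_mul, Matrix.mul_one, smul_zero, sub_zero]
  abel

lemma sum_P_mulVec {N : ℕ} (hN : N ≠ 0) (v : Fin N → ℝ) :
    ∑ i, ((((1 : Matrix (Fin N) (Fin N) ℝ)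
        - Matrix.of fun _ _ => (1 : ℝ) / N).mulVec v) i) = 0 := by
  have : ∀ i, ((((1 : Matrix (Fin N) (Fin N) ℝ)
      - Matrix.of fun _ _ => (1 : ℝ) / N).mulVec v) i)
      = v i - (∑ j, v j) / N := by
    intro i
    rw [Matrix.sub_mulVec, Matrix.one_mulVec]
    simp only [Matrix.mulVec, dotProduct, Matrix.of_apply, Pi.sub_apply, Finset.sum_div]
    congr 1
    exact Finset.sum_congr rfl fun j _ => by ring
  simp only [this, Finset.sum_sub_distrib, Finset.sum_const, Finset.card_univ,
    Fintype.card_fin, nsmul_eq_mul]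
  field_simp
  simp

lemma memℒp_mulVec_comp {N : ℕ} {Ω : Type*} {mΩ : MeasurableSpace Ω} {μ : Measure Ω}
    {g : Ω → Fin N → ℝ} (hg : ∀ j, MemLp (fun ω => g ω j) 2 μ)
    (B : Matrix (Fin N) (Fin N) ℝ) (i : Fin N) :
    MemLp (fun ω => (B.mulVec (g ω)) i) 2 μ := by
  have h : (fun ω => (B.mulVec (g ω)) i) = fun ω => ∑ j, B i j * g ω j := by
    funext ω; simp [Matrix.mulVec, dotProduct]
  rw [h]
  exact memLp_finset_sum _ fun j _ => (hg j).const_mul _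

lemma L2_mul_integrable {Ω : Type*} {mΩ : MeasurableSpace Ω} {μ : Measure Ω}
    {f g : Ω → ℝ} (hf : MemLp f 2 μ) (hg : MemLp g 2 μ) :
    Integrable (fun ω => f ω * g ω) μ := by
  rw [← memLp_one_iff_integrable]
  have h := MemLp.smul (φ := f) hg hf (p := 2) (q := 2) (r := 1)
  have he : f • g = fun ω => f ω * g ω := by funext ω; simp [Pi.smul_apply', smul_eq_mul]
  rwa [he] at h

lemma integral_mul_eq_zero {Ω : Type*} {mΩ : MeasurableSpace Ω} {μ : Measure Ω}
    [IsProbabilityMeasure μ] {m : MeasurableSpace Ω} (hm : m ≤ mΩ)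
    {f g : Ω → ℝ} (hf : StronglyMeasurable[m] f) (hf2 : MemLp f 2 μ) (hg2 : MemLp g 2 μ)
    (hg_cond : μ[g | m] =ᵐ[μ] 0) : ∫ ω, f ω * g ω ∂μ = 0 := by
  have hfg : Integrable (f * g) μ := L2_mul_integrable hf2 hg2
  have hg_int : Integrable g μ := hg2.integrable one_le_two
  have h := condExp_mul_of_stronglyMeasurable_left hf hfg hg_int
  haveI : SigmaFinite (μ.trim hm) := by
    have : IsFiniteMeasure (μ.trim hm) := isFiniteMeasure_trim hm
    infer_instance
  have h1 : ∫ ω, (f * g) ω ∂μ = ∫ ω, (μ[f * g | m]) ω ∂μ := (integral_condExp hm).symm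
  have h2 : ∫ ω, (μ[f * g | m]) ω ∂μ = 0 := by
    have hz : μ[f * g | m] =ᵐ[μ] 0 := by
      refine h.trans ?_
      filter_upwards [hg_cond] with ω hω
      simp [hω]
    rw [integral_congr_ae hz]; simp
  simpa using h1.trans h2


/-- One-step expected Lyapunov inequality (used in the proof of Theorem 1):
`E[V(k+1)] ≤ (1 - 2 α(k) λ + α(k)² ‖L̄‖²) E[V(k)] + α(k)² ‖I - J‖² M`. -/
theorem expected_lyapunov_recursion {N : ℕ} (hN : 2 ≤ N)
    {Ω : Type*} {mΩ : MeasurableSpace Ω} (μ : Measure Ω) [IsProbabilityMeasure μ]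
    (ℱ : Filtration ℕ mΩ)
    (L : Matrix (Fin N) (Fin N) ℝ) (hLsymm : L.IsSymm)
    (hL1 : L.mulVec (fun _ => (1 : ℝ)) = 0)
    (lam : ℝ) (hlam : 0 < lam)
    (hgap : ∀ v : Fin N → ℝ, (∑ i, v i) = 0 →
      lam * (∑ i, (v i) ^ 2) ≤ v ⬝ᵥ L.mulVec v)
    (α : ℕ → ℝ) (hα_pos : ∀ k, 0 < α k)
    (hdiag : ∀ (i : Fin N) (k : ℕ), 0 < 1 - α k * L i i)
    (hα_div : Tendsto (fun n => ∑ k ∈ Finset.range n, α k) atTop atTop)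
    (hα_sq : Summable (fun k => (α k) ^ 2))
    (M : ℝ) (hM : 0 ≤ M)
    (w : ℕ → Ω → Fin N → ℝ)
    (hw_meas : ∀ k, Measurable[ℱ (k + 1)] (w k))
    (hw_L2 : ∀ k, MemLp (w k) 2 μ)
    (hw_cond : ∀ k i, μ[(fun ω => w k ω i) | ℱ k] =ᵐ[μ] 0)
    (hw_bound : ∀ k, ∫ ω, (∑ i, (w k ω i) ^ 2) ∂μ ≤ M)
    (x : ℕ → Ω → Fin N → ℝ) (ξ : Fin N → ℝ) (hx0 : ∀ ω, x 0 ω = ξ)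
    (hx_meas : ∀ k, Measurable[ℱ k] (x k))
    (hrec : ∀ k ω, x (k + 1) ω =
      ((1 : Matrix (Fin N) (Fin N) ℝ) - α k • L).mulVec (x k ω) + α k • w k ω) :
    ∀ k : ℕ,
      (∫ ω, ∑ i, ((((1 : Matrix (Fin N) (Fin N) ℝ)
          - Matrix.of fun _ _ => (1 : ℝ) / N).mulVec (x (k + 1) ω)) i) ^ 2 ∂μ)
        ≤ (1 - 2 * α k * lam + (α k) ^ 2 * (specNorm L) ^ 2) *
            (∫ ω, ∑ i, ((((1 : Matrix (Fin N) (Fin N) ℝ)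
              - Matrix.of fun _ _ => (1 : ℝ) / N).mulVec (x k ω)) i) ^ 2 ∂μ)
          + (α k) ^ 2 * (specNorm ((1 : Matrix (Fin N) (Fin N) ℝ)
              - Matrix.of fun _ _ => (1 : ℝ) / N)) ^ 2 * M := by
  intro k
  have hNne : N ≠ 0 := by omega
  set P : Matrix (Fin N) (Fin N) ℝ :=
    (1 : Matrix (Fin N) (Fin N) ℝ) - Matrix.of fun _ _ => (1 : ℝ) / N with hP
  set A : Matrix (Fin N) (Fin N) ℝ := (1 : Matrix (Fin N) (Fin N) ℝ) - α k • L with hA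
  have hm : ℱ k ≤ mΩ := ℱ.le k
  have hwc : ∀ n j, MemLp (fun ω => w n ω j) 2 μ := by
    intro n j
    have h := ContinuousLinearMap.comp_memLp'
      (ContinuousLinearMap.proj (R := ℝ) (φ := fun _ : Fin N => ℝ) j) (hw_L2 n)
    exact h
  have hxc : ∀ n j, MemLp (fun ω => x n ω j) 2 μ := by
    intro n
    induction n with
    | zero =>
      intro j
      have h : (fun ω => x 0 ω j) = fun _ => ξ j := funext fun ω => by rw [hx0]
      rw [h]; exact memLp_const _
    | succ n ih =>
      intro j
      have hfe : (fun ω => x (n + 1) ω j)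
          = fun ω => (((1 : Matrix (Fin N) (Fin N) ℝ) - α n • L).mulVec (x n ω)) j
              + α n * w n ω j := by
        funext ω; rw [hrec n ω]; simp
      rw [hfe]
      exact (memℒp_mulVec_comp ih _ j).add ((hwc n j).const_mul _)
  have hyL2 : ∀ i, MemLp (fun ω => (P.mulVec (x k ω)) i) 2 μ :=
    memℒp_mulVec_comp (hxc k) P
  have hfL2 : ∀ i, MemLp (fun ω => (A.mulVec (P.mulVec (x k ω))) i) 2 μ :=
    fun i => memℒp_mulVec_comp hyL2 A i
  have hzL2 : ∀ i, MemLp (fun ω => (P.mulVec (w k ω)) i) 2 μ :=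
    memℒp_mulVec_comp (hwc k) P
  have hcomm : P * A = A * P := by rw [hP, hA]; exact P_comm L hLsymm hL1 (α k)
  have hdecomp : ∀ ω, P.mulVec (x (k + 1) ω)
      = fun i => (A.mulVec (P.mulVec (x k ω))) i + α k * (P.mulVec (w k ω)) i := by
    intro ω
    have h1 : P.mulVec (x (k + 1) ω)
        = A.mulVec (P.mulVec (x k ω)) + α k • P.mulVec (w k ω) := by
      rw [hrec k ω, ← hA, Matrix.mulVec_add, Matrix.mulVec_smul,
        Matrix.mulVec_mulVec, hcomm, ← Matrix.mulVec_mulVec]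
    rw [h1]; funext i; simp
  have hpt : ∀ ω, ∑ i, ((P.mulVec (x (k + 1) ω)) i) ^ 2
      = (∑ i, ((A.mulVec (P.mulVec (x k ω))) i) ^ 2)
        + (2 * α k) * (∑ i, (A.mulVec (P.mulVec (x k ω))) i * (P.mulVec (w k ω)) i)
        + (α k) ^ 2 * (∑ i, ((P.mulVec (w k ω)) i) ^ 2) := by
    intro ω
    rw [hdecomp ω, Finset.mul_sum, Finset.mul_sum,
      ← Finset.sum_add_distrib, ← Finset.sum_add_distrib]
    exact Finset.sum_congr rfl fun i _ => by ring
  have hintF : Integrable (fun ω => ∑ i, ((A.mulVec (P.mulVec (x k ω))) i) ^ 2) μ :=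
    integrable_finset_sum _ fun i _ => (hfL2 i).integrable_sq
  have hintV : Integrable (fun ω => ∑ i, ((P.mulVec (x k ω)) i) ^ 2) μ :=
    integrable_finset_sum _ fun i _ => (hyL2 i).integrable_sq
  have hintW : Integrable (fun ω => ∑ i, ((P.mulVec (w k ω)) i) ^ 2) μ :=
    integrable_finset_sum _ fun i _ => (hzL2 i).integrable_sq
  have hintw2 : Integrable (fun ω => ∑ i, (w k ω i) ^ 2) μ :=
    integrable_finset_sum _ fun i _ => (hwc k i).integrable_sq
  have hintC : Integrable
      (fun ω => ∑ i, (A.mulVec (P.mulVec (x k ω))) i * (P.mulVec (w k ω)) i) μ :=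
    integrable_finset_sum _ fun i _ => L2_mul_integrable (hfL2 i) (hzL2 i)
  have hxm : ∀ j, Measurable[ℱ k] (fun ω => x k ω j) :=
    fun j => (measurable_pi_apply j).comp (hx_meas k)
  have hym : ∀ j, Measurable[ℱ k] (fun ω => (P.mulVec (x k ω)) j) := by
    intro j
    have h : (fun ω => (P.mulVec (x k ω)) j) = fun ω => ∑ l, P j l * x k ω l := by
      funext ω; simp [Matrix.mulVec, dotProduct]
    rw [h]
    exact Finset.measurable_sum _ fun l _ => (hxm l).const_mul _
  have hfm : ∀ i, StronglyMeasurable[ℱ k] (fun ω => (A.mulVec (P.mulVec (x k ω))) i) := by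
    intro i
    have h : (fun ω => (A.mulVec (P.mulVec (x k ω))) i)
        = fun ω => ∑ l, A i l * (P.mulVec (x k ω)) l := by
      funext ω; simp [Matrix.mulVec, dotProduct]
    rw [h]
    exact (Finset.measurable_sum _ fun l _ => (hym l).const_mul _).stronglyMeasurable
  have hcross : ∫ ω, ∑ i, (A.mulVec (P.mulVec (x k ω))) i * (P.mulVec (w k ω)) i ∂μ = 0 := by
    rw [integral_finset_sum _ fun i _ => L2_mul_integrable (hfL2 i) (hzL2 i)]
    refine Finset.sum_eq_zero fun i _ => ?_
    have hre : (fun ω => (A.mulVec (P.mulVec (x k ω))) i * (P.mulVec (w k ω)) i)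
        = fun ω => ∑ j, P i j * ((A.mulVec (P.mulVec (x k ω))) i * w k ω j) := by
      funext ω
      rw [show (P.mulVec (w k ω)) i = ∑ j, P i j * w k ω j from rfl, Finset.mul_sum]
      exact Finset.sum_congr rfl fun j _ => by ring
    rw [hre, integral_finset_sum _ fun j _ =>
      ((L2_mul_integrable (hfL2 i) (hwc k j)).const_mul _)]
    refine Finset.sum_eq_zero fun j _ => ?_
    rw [MeasureTheory.integral_const_mul,
      integral_mul_eq_zero hm (hfm i) (hfL2 i) (hwc k j) (hw_cond k j), mul_zero]
  have hy0 : ∀ ω, ∑ i, (P.mulVec (x k ω)) i = 0 := fun ω => by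
    rw [hP]; exact sum_P_mulVec hNne (x k ω)
  have hb1 : ∫ ω, ∑ i, ((A.mulVec (P.mulVec (x k ω))) i) ^ 2 ∂μ
      ≤ (1 - 2 * α k * lam + (α k) ^ 2 * (specNorm L) ^ 2)
        * ∫ ω, ∑ i, ((P.mulVec (x k ω)) i) ^ 2 ∂μ := by
    rw [← MeasureTheory.integral_const_mul]
    refine integral_mono hintF (hintV.const_mul _) fun ω => ?_
    have h := contract_ineq L lam (α k) (hα_pos k) hgap (P.mulVec (x k ω)) (hy0 ω)
    rw [← hA] at h
    exact h
  have hb2 : ∫ ω, ∑ i, ((P.mulVec (w k ω)) i) ^ 2 ∂μ ≤ (specNorm P) ^ 2 * M := by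
    calc ∫ ω, ∑ i, ((P.mulVec (w k ω)) i) ^ 2 ∂μ
        ≤ ∫ ω, (specNorm P) ^ 2 * ∑ i, (w k ω i) ^ 2 ∂μ :=
          integral_mono hintW (hintw2.const_mul _) fun ω => sq_sum_mulVec_le P (w k ω)
      _ = (specNorm P) ^ 2 * ∫ ω, ∑ i, (w k ω i) ^ 2 ∂μ := MeasureTheory.integral_const_mul _ _
      _ ≤ (specNorm P) ^ 2 * M := mul_le_mul_of_nonneg_left (hw_bound k) (sq_nonneg _)
  have hsplit : ∫ ω, ∑ i, ((P.mulVec (x (k + 1) ω)) i) ^ 2 ∂μ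
      = (∫ ω, ∑ i, ((A.mulVec (P.mulVec (x k ω))) i) ^ 2 ∂μ)
        + (2 * α k) * (∫ ω, ∑ i, (A.mulVec (P.mulVec (x k ω))) i * (P.mulVec (w k ω)) i ∂μ)
        + (α k) ^ 2 * (∫ ω, ∑ i, ((P.mulVec (w k ω)) i) ^ 2 ∂μ) := by
    rw [integral_congr_ae (Filter.Eventually.of_forall fun ω => hpt ω)]
    have hI2 : Integrable (fun ω =>
        (2 * α k) * (∑ i, (A.mulVec (P.mulVec (x k ω))) i * (P.mulVec (w k ω)) i)) μ := by
      exact hintC.const_mul _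
    have hI12 : Integrable (fun ω => (∑ i, ((A.mulVec (P.mulVec (x k ω))) i) ^ 2)
        + (2 * α k) * (∑ i, (A.mulVec (P.mulVec (x k ω))) i * (P.mulVec (w k ω)) i)) μ := by
      exact hintF.add hI2
    have hI3 : Integrable (fun ω => (α k) ^ 2 * (∑ i, ((P.mulVec (w k ω)) i) ^ 2)) μ := by
      exact hintW.const_mul _
    rw [integral_add hI12 hI3, integral_add hintF hI2,
      MeasureTheory.integral_const_mul, MeasureTheory.integral_const_mul]
  rw [hsplit, hcross, mul_zero, add_zero]
  have h3 : (α k) ^ 2 * (∫ ω, ∑ i, ((P.mulVec (w k ω)) i) ^ 2 ∂μ)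
      ≤ (α k) ^ 2 * (specNorm P) ^ 2 * M := by
    rw [mul_assoc]
    exact mul_le_mul_of_nonneg_left hb2 (sq_nonneg _)
  exact add_le_add hb1 h3
end

section
/- Under the stated setting, lim_{k→∞} E[V(k)] = 0; consequently, for every i ∈ {1,…,N}, lim_{k→∞} E[(x_i(k) − (1/N)𝟙ᵀx(k))²] = 0, i.e., the multi-agent system achieves weak consensus (Theorem 1). -/
open MeasureTheory Filter Matrix Finset

private lemma int_mul {Ω : Type*} {mΩ : MeasurableSpace Ω} {μ : Measure Ω} [IsFiniteMeasure μ]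
    {f g : Ω → ℝ} (hf : MemLp f 2 μ) (hg : MemLp g 2 μ) :
    Integrable (fun ω => f ω * g ω) μ := by
  have h : MemLp (g • f) 1 μ := hf.smul hg
  have := h.integrable le_rfl
  exact (by simpa [Pi.smul_apply, smul_eq_mul, mul_comm] using this : Integrable (f * g) μ)

private lemma orth {Ω : Type*} {mΩ : MeasurableSpace Ω} {μ : Measure Ω} [IsProbabilityMeasure μ]
    {m : MeasurableSpace Ω} (hm : m ≤ mΩ) {f g : Ω → ℝ}
    (hfm : Measurable[m] f) (hf2 : MemLp f 2 μ) (hg2 : MemLp g 2 μ)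
    (hgc : μ[g | m] =ᵐ[μ] 0) : ∫ ω, f ω * g ω ∂μ = 0 := by
  have hfg : Integrable (f * g) μ := int_mul hf2 hg2
  have hcx : μ[f * g | m] =ᵐ[μ] f * μ[g | m] :=
    condExp_mul_of_stronglyMeasurable_left hfm.stronglyMeasurable hfg (hg2.integrable one_le_two)
  have h0 : μ[f * g | m] =ᵐ[μ] 0 := by
    refine hcx.trans ?_
    filter_upwards [hgc] with ω h
    simp [h]
  have h1 : ∫ ω, (f * g) ω ∂μ = ∫ ω, (μ[f * g | m]) ω ∂μ := (integral_condExp hm (f := f * g)).symm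
  have h2 : ∫ ω, (μ[f * g | m]) ω ∂μ = 0 := by
    rw [integral_congr_ae h0]; simp
  simpa [Pi.mul_apply] using h1.trans h2

private lemma ptwise_lin {N : ℕ} (L : Matrix (Fin N) (Fin N) ℝ) (lam : ℝ)
    (hgap : ∀ v : Fin N → ℝ, (∑ i, v i) = 0 →
      lam * (∑ i, (v i) ^ 2) ≤ v ⬝ᵥ L.mulVec v)
    (a : ℝ) (ha : 0 ≤ a) (v : Fin N → ℝ) (hv : ∑ i, v i = 0) :
    ∑ i, (v i - a * ∑ j, L i j * v j) ^ 2
      ≤ (1 - 2 * lam * a + (∑ i, ∑ j, (L i j) ^ 2) * a ^ 2) * ∑ i, (v i) ^ 2 := by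
  set t : Fin N → ℝ := fun i => ∑ j, L i j * v j with ht
  have hCS : ∀ i, (t i) ^ 2 ≤ (∑ j, (L i j) ^ 2) * ∑ j, (v j) ^ 2 := by
    intro i
    simpa using Finset.sum_mul_sq_le_sq_mul_sq Finset.univ (fun j => L i j) v
  have hsumt : ∑ i, (t i) ^ 2 ≤ (∑ i, ∑ j, (L i j) ^ 2) * ∑ j, (v j) ^ 2 := by
    rw [Finset.sum_mul]
    exact Finset.sum_le_sum fun i _ => hCS i
  have hquad : lam * (∑ i, (v i) ^ 2) ≤ ∑ i, v i * t i := by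
    have := hgap v hv
    simpa [dotProduct, Matrix.mulVec, ht] using this
  have hexp : ∑ i, (v i - a * t i) ^ 2
      = (∑ i, (v i) ^ 2) - 2 * a * (∑ i, v i * t i) + a ^ 2 * ∑ i, (t i) ^ 2 := by
    have h1 : ∀ i, (v i - a * t i) ^ 2
        = (v i) ^ 2 - 2 * a * (v i * t i) + a ^ 2 * (t i) ^ 2 := fun i => by ring
    rw [Finset.sum_congr rfl fun i _ => h1 i, Finset.sum_add_distrib, Finset.sum_sub_distrib,
      ← Finset.mul_sum, ← Finset.mul_sum]
  have h2 : a * (lam * ∑ i, (v i) ^ 2) ≤ a * ∑ i, v i * t i :=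
    mul_le_mul_of_nonneg_left hquad ha
  have h3 : a ^ 2 * ∑ i, (t i) ^ 2 ≤ a ^ 2 * ((∑ i, ∑ j, (L i j) ^ 2) * ∑ j, (v j) ^ 2) :=
    mul_le_mul_of_nonneg_left hsumt (sq_nonneg a)
  rw [hexp]; nlinarith [h2, h3]

private lemma ptwise_noise {N : ℕ} (hN0 : (N : ℝ) ≠ 0) (g : Fin N → ℝ) :
    ∑ i, (g i - (∑ j, g j) / N) ^ 2 ≤ ∑ i, (g i) ^ 2 := by
  set W := ∑ j, g j with hW
  have h1 : ∀ i : Fin N, (g i - W / N) ^ 2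
      = (g i) ^ 2 - 2 * (W / N) * g i + (W / N) ^ 2 := fun i => by ring
  have h2 : ∑ i, (g i - W / N) ^ 2 = (∑ i, (g i) ^ 2) - W ^ 2 / N := by
    rw [Finset.sum_congr rfl fun i _ => h1 i, Finset.sum_add_distrib, Finset.sum_sub_distrib,
      ← Finset.mul_sum, ← hW, Finset.sum_const, Finset.card_univ, Fintype.card_fin,
      nsmul_eq_mul]
    field_simp
    ring
  rw [h2]
  have : 0 ≤ W ^ 2 / N := div_nonneg (sq_nonneg _) (Nat.cast_nonneg N)
  linarith

private lemma one_step {N : ℕ} (hN0 : (N : ℝ) ≠ 0)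
    {Ω : Type*} {mΩ : MeasurableSpace Ω} (μ : Measure Ω) [IsProbabilityMeasure μ]
    {m : MeasurableSpace Ω} (hm : m ≤ mΩ)
    (L : Matrix (Fin N) (Fin N) ℝ) (lam : ℝ)
    (hgap : ∀ v : Fin N → ℝ, (∑ i, v i) = 0 →
      lam * (∑ i, (v i) ^ 2) ≤ v ⬝ᵥ L.mulVec v)
    (a : ℝ) (ha : 0 ≤ a) (M : ℝ)
    (u g : Ω → Fin N → ℝ)
    (hum : ∀ i, Measurable[m] fun ω => u ω i)
    (hu2 : ∀ i, MemLp (fun ω => u ω i) 2 μ)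
    (hg2 : ∀ i, MemLp (fun ω => g ω i) 2 μ)
    (hgc : ∀ i, μ[(fun ω => g ω i) | m] =ᵐ[μ] 0)
    (hgM : ∫ ω, (∑ i, (g ω i) ^ 2) ∂μ ≤ M)
    (hsum0 : ∀ ω, ∑ i, u ω i = 0) :
    ∫ ω, ∑ i, (u ω i - a * (∑ j, L i j * u ω j)
        + a * (g ω i - (∑ j, g ω j) / N)) ^ 2 ∂μ
      ≤ (1 - 2 * lam * a + (∑ i, ∑ j, (L i j) ^ 2) * a ^ 2) * (∫ ω, ∑ i, (u ω i) ^ 2 ∂μ)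
        + a ^ 2 * M := by
  set C := ∑ i, ∑ j, (L i j) ^ 2 with hC
  set F : Ω → Fin N → ℝ := fun ω i => u ω i - a * (∑ j, L i j * u ω j) with hF
  set H : Ω → Fin N → ℝ := fun ω i => g ω i - (∑ j, g ω j) / N with hH
  -- L² and measurability facts
  have hF2 : ∀ i, MemLp (fun ω => F ω i) 2 μ := by
    intro i
    exact (hu2 i).sub ((memLp_finset_sum Finset.univ
      (fun j _ => (hu2 j).const_mul (L i j))).const_mul a)
  have hFm : ∀ i, Measurable[m] fun ω => F ω i := by
    intro i
    exact (hum i).sub ((Finset.measurable_sum Finset.univ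
      (fun j _ => (hum j).const_mul (L i j))).const_mul a)
  have hH2 : ∀ i, MemLp (fun ω => H ω i) 2 μ := by
    intro i
    have hs : MemLp (fun ω => (N : ℝ)⁻¹ * ∑ j, g ω j) 2 μ :=
      (memLp_finset_sum Finset.univ (fun j _ => hg2 j)).const_mul _
    have : (fun ω => H ω i) = fun ω => g ω i - (N : ℝ)⁻¹ * ∑ j, g ω j := by
      funext ω; simp [hH, div_eq_inv_mul]
    rw [this]
    exact (hg2 i).sub hs
  have hHc : ∀ i, μ[(fun ω => H ω i) | m] =ᵐ[μ] 0 := by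
    intro i
    have hgint : ∀ j, Integrable (fun ω => g ω j) μ := fun j => (hg2 j).integrable one_le_two
    have hsint : Integrable (fun ω => (N : ℝ)⁻¹ * ∑ j, g ω j) μ :=
      (integrable_finset_sum Finset.univ fun j _ => hgint j).const_mul _
    have heq : (fun ω => H ω i)
        = (fun ω => g ω i) - (N : ℝ)⁻¹ • (fun ω => ∑ j, g ω j) := by
      funext ω; simp [hH, div_eq_inv_mul]
    rw [heq]
    have h1 := condExp_sub (m := m) (μ := μ) (hgint i)
      (by exact hsint)
      (f := fun ω => g ω i) (g := (N : ℝ)⁻¹ • (fun ω => ∑ j, g ω j))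
    refine h1.trans ?_
    have h2 := condExp_smul (m := m) (μ := μ) ((N : ℝ)⁻¹) (fun ω => ∑ j, g ω j)
    have h3 := condExp_finset_sum (m := m) (μ := μ) (s := Finset.univ)
      (f := fun j ω => g ω j) (fun j _ => hgint j)
    have h4 : μ[(fun ω => ∑ j, g ω j) | m] =ᵐ[μ] 0 := by
      have hsum_eq : (fun ω => ∑ j : Fin N, g ω j) = ∑ j : Fin N, (fun ω => g ω j) := by
        funext ω; simp
      rw [hsum_eq]
      refine h3.trans ?_
      have := eventuallyEq_sum (f := fun j => μ[(fun ω => g ω j) | m])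
        (g := fun _ => (0 : Ω → ℝ)) (s := Finset.univ) (fun j _ => hgc j)
      refine this.trans ?_
      simp
    filter_upwards [hgc i, h2, h4] with ω hω1 hω2 hω3
    simp [hω1, hω2, hω3]
  -- integrability of the pieces
  have husqInt : Integrable (fun ω => ∑ i, (u ω i) ^ 2) μ :=
    integrable_finset_sum _ fun i _ => (hu2 i).integrable_sq
  have hFsqInt : Integrable (fun ω => ∑ i, (F ω i) ^ 2) μ :=
    integrable_finset_sum _ fun i _ => (hF2 i).integrable_sq
  have hHsqInt : Integrable (fun ω => ∑ i, (H ω i) ^ 2) μ :=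
    integrable_finset_sum _ fun i _ => (hH2 i).integrable_sq
  have hgsqInt : Integrable (fun ω => ∑ i, (g ω i) ^ 2) μ :=
    integrable_finset_sum _ fun i _ => (hg2 i).integrable_sq
  have hFHInt : ∀ i, Integrable (fun ω => F ω i * H ω i) μ :=
    fun i => int_mul (hF2 i) (hH2 i)
  have hFHsumInt : Integrable (fun ω => ∑ i, F ω i * H ω i) μ :=
    integrable_finset_sum _ fun i _ => hFHInt i
  -- expand the integrand
  have hsplit : (fun ω => ∑ i, (u ω i - a * (∑ j, L i j * u ω j)
        + a * (g ω i - (∑ j, g ω j) / N)) ^ 2)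
      = fun ω => (∑ i, (F ω i) ^ 2) + ((2 * a) * ∑ i, F ω i * H ω i
          + a ^ 2 * ∑ i, (H ω i) ^ 2) := by
    funext ω
    have h1 : ∀ i : Fin N, (F ω i + a * H ω i) ^ 2
        = (F ω i) ^ 2 + ((2 * a) * (F ω i * H ω i) + a ^ 2 * (H ω i) ^ 2) :=
      fun i => by ring
    calc ∑ i, (u ω i - a * (∑ j, L i j * u ω j) + a * (g ω i - (∑ j, g ω j) / N)) ^ 2
        = ∑ i, (F ω i + a * H ω i) ^ 2 := rfl
      _ = ∑ i, ((F ω i) ^ 2 + ((2 * a) * (F ω i * H ω i) + a ^ 2 * (H ω i) ^ 2)) :=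
          Finset.sum_congr rfl fun i _ => h1 i
      _ = _ := by
          rw [Finset.sum_add_distrib, Finset.sum_add_distrib, ← Finset.mul_sum, ← Finset.mul_sum]
  rw [hsplit]
  have hInt1 : Integrable (fun ω => 2 * a * ∑ i, F ω i * H ω i) μ := hFHsumInt.const_mul _
  have hInt2 : Integrable (fun ω => a ^ 2 * ∑ i, (H ω i) ^ 2) μ := hHsqInt.const_mul _
  have hInt12 : Integrable (fun ω => 2 * a * ∑ i, F ω i * H ω i
      + a ^ 2 * ∑ i, (H ω i) ^ 2) μ := hInt1.add hInt2
  rw [integral_add hFsqInt hInt12, integral_add hInt1 hInt2,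
    integral_const_mul, integral_const_mul]
  -- cross term vanishes
  have hcross : ∫ ω, ∑ i, F ω i * H ω i ∂μ = 0 := by
    rw [integral_finset_sum _ fun i _ => hFHInt i]
    refine Finset.sum_eq_zero fun i _ => ?_
    exact orth hm (hFm i) (hF2 i) (hH2 i) (hHc i)
  rw [hcross, mul_zero]
  -- main term
  have hmain : ∫ ω, ∑ i, (F ω i) ^ 2 ∂μ
      ≤ (1 - 2 * lam * a + C * a ^ 2) * ∫ ω, ∑ i, (u ω i) ^ 2 ∂μ := by
    have hpt : ∀ ω, ∑ i, (F ω i) ^ 2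
        ≤ (1 - 2 * lam * a + C * a ^ 2) * ∑ i, (u ω i) ^ 2 := by
      intro ω
      exact ptwise_lin L lam hgap a ha (u ω) (hsum0 ω)
    calc ∫ ω, ∑ i, (F ω i) ^ 2 ∂μ
        ≤ ∫ ω, (1 - 2 * lam * a + C * a ^ 2) * ∑ i, (u ω i) ^ 2 ∂μ :=
          integral_mono hFsqInt (husqInt.const_mul _) hpt
      _ = _ := integral_const_mul _ _
  have hnoise : ∫ ω, ∑ i, (H ω i) ^ 2 ∂μ ≤ M := by
    calc ∫ ω, ∑ i, (H ω i) ^ 2 ∂μ ≤ ∫ ω, ∑ i, (g ω i) ^ 2 ∂μ :=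
          integral_mono hHsqInt hgsqInt (fun ω => ptwise_noise hN0 (g ω))
      _ ≤ M := hgM
  have h5 : a ^ 2 * ∫ ω, ∑ i, (H ω i) ^ 2 ∂μ ≤ a ^ 2 * M :=
    mul_le_mul_of_nonneg_left hnoise (sq_nonneg a)
  linarith

set_option maxHeartbeats 1000000 in
private lemma det_limit (lam : ℝ) (hlam : 0 < lam) (C M : ℝ) (hC : 0 ≤ C) (hM : 0 ≤ M)
    (α : ℕ → ℝ) (hα_pos : ∀ k, 0 < α k)
    (hα_div : Tendsto (fun n => ∑ k ∈ Finset.range n, α k) atTop atTop)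
    (hα_sq : Summable (fun k => (α k) ^ 2))
    (V : ℕ → ℝ) (hV : ∀ k, 0 ≤ V k)
    (hrec : ∀ k, V (k + 1) ≤ (1 - 2 * lam * α k + C * (α k) ^ 2) * V k + (α k) ^ 2 * M) :
    Tendsto V atTop (nhds 0) := by
  -- α tends to 0
  have hα0 : Tendsto α atTop (nhds 0) := by
    have h1 := hα_sq.tendsto_atTop_zero
    have h2 : Tendsto (fun k => Real.sqrt ((α k) ^ 2)) atTop (nhds 0) := by
      have := (Real.continuous_sqrt.tendsto 0).comp h1
      simpa [Function.comp_def] using this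
    exact h2.congr fun k => Real.sqrt_sq (hα_pos k).le
  -- eventually the coefficient is at most 1 - lam * α k, which lies in [0,1]
  have hδ : (0 : ℝ) < min (lam / (C + 1)) (1 / lam) :=
    lt_min (by positivity) (by positivity)
  have hev : ∀ᶠ k in atTop, α k < min (lam / (C + 1)) (1 / lam) :=
    hα0.eventually_lt_const hδ
  obtain ⟨K₀, hK₀⟩ := eventually_atTop.mp hev
  have hstep : ∀ k, K₀ ≤ k → V (k + 1) ≤ (1 - lam * α k) * V k + (α k) ^ 2 * M := by
    intro k hk
    have h1 := hK₀ k hk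
    have h2 : α k < lam / (C + 1) := lt_of_lt_of_le h1 (min_le_left _ _)
    have hca : C * α k ≤ lam := by
      have h3 : (C + 1) * α k < (C + 1) * (lam / (C + 1)) :=
        mul_lt_mul_of_pos_left h2 (by linarith)
      have h4 : (C + 1) * (lam / (C + 1)) = lam := by field_simp
      nlinarith [(hα_pos k).le]
    have h5 := hrec k
    have h6 : 0 ≤ (lam - C * α k) * α k * V k :=
      mul_nonneg (mul_nonneg (sub_nonneg.mpr hca) (hα_pos k).le) (hV k)
    nlinarith [h5, h6]
  have hfac : ∀ k, K₀ ≤ k → 0 ≤ 1 - lam * α k ∧ 1 - lam * α k ≤ 1 := by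
    intro k hk
    have h1 : α k < 1 / lam := lt_of_lt_of_le (hK₀ k hk) (min_le_right _ _)
    constructor
    · have : lam * α k < lam * (1 / lam) := mul_lt_mul_of_pos_left h1 hlam
      rw [mul_one_div, div_self hlam.ne'] at this
      linarith
    · nlinarith [(hα_pos k).le, hlam.le]
  rw [Metric.tendsto_atTop]
  intro ε hε
  -- choose K beyond which the tail sum of α² is small
  have htail : Tendsto (fun K => M * ∑' j, (α (j + K)) ^ 2) atTop (nhds 0) := by
    have h1 : Tendsto (fun K => ∑' j, (α (j + K)) ^ 2) atTop (nhds 0) :=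
      tendsto_sum_nat_add (fun k => (α k) ^ 2)
    simpa using h1.const_mul M
  have hKev : ∀ᶠ K in atTop, M * ∑' j, (α (j + K)) ^ 2 < ε / 2 :=
    htail.eventually_lt_const (by linarith)
  obtain ⟨K₁, hK₁⟩ := eventually_atTop.mp hKev
  set K := max K₀ K₁ with hK
  have hKK₀ : K₀ ≤ K := le_max_left _ _
  have hKtail : M * ∑' j, (α (j + K)) ^ 2 < ε / 2 := hK₁ K (le_max_right _ _)
  have hsummK : Summable fun j => (α (j + K)) ^ 2 := (summable_nat_add_iff K).2 hα_sq
  have hT0 : 0 ≤ ∑' j, (α (j + K)) ^ 2 := tsum_nonneg fun j => sq_nonneg _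
  -- partial tail sums are bounded by the tail tsum
  have hS : ∀ n, ∑ k ∈ Finset.Ico K n, (α k) ^ 2 ≤ ∑' j, (α (j + K)) ^ 2 := by
    intro n
    rcases le_or_gt K n with h | h
    · rw [Finset.sum_Ico_eq_sum_range]
      have : ∀ j, α (K + j) ^ 2 = α (j + K) ^ 2 := fun j => by rw [add_comm]
      rw [Finset.sum_congr rfl fun j _ => this j]
      exact Summable.sum_le_tsum _ (fun j _ => sq_nonneg _) hsummK
    · rw [Finset.Ico_eq_empty (by omega)]
      simpa using hT0
  -- the product-form bound by induction
  have hbound : ∀ n, K ≤ n → V n ≤ (∏ k ∈ Finset.Ico K n, (1 - lam * α k)) * V K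
      + M * ∑ k ∈ Finset.Ico K n, (α k) ^ 2 := by
    intro n hn
    induction n, hn using Nat.le_induction with
    | base => simp
    | succ n hn ih =>
      have hP0 : 0 ≤ ∏ k ∈ Finset.Ico K n, (1 - lam * α k) :=
        Finset.prod_nonneg fun k hk =>
          (hfac k (le_trans hKK₀ (Finset.mem_Ico.mp hk).1)).1
      have hfn := hfac n (le_trans hKK₀ hn)
      have hSn : 0 ≤ ∑ k ∈ Finset.Ico K n, (α k) ^ 2 :=
        Finset.sum_nonneg fun k _ => sq_nonneg _
      have h1 := hstep n (le_trans hKK₀ hn)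
      rw [Finset.prod_Ico_succ_top hn, Finset.sum_Ico_succ_top hn]
      have h2 : V (n + 1) ≤ (1 - lam * α n) * ((∏ k ∈ Finset.Ico K n, (1 - lam * α k)) * V K
          + M * ∑ k ∈ Finset.Ico K n, (α k) ^ 2) + (α n) ^ 2 * M := by
        refine le_trans h1 ?_
        have := mul_le_mul_of_nonneg_left ih hfn.1
        linarith
      refine le_trans h2 ?_
      have h3 : (1 - lam * α n) * (M * ∑ k ∈ Finset.Ico K n, (α k) ^ 2)
          ≤ M * ∑ k ∈ Finset.Ico K n, (α k) ^ 2 := by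
        nlinarith [mul_nonneg hM hSn]
      nlinarith [mul_nonneg hP0 (hV K)]
  -- the product tends to 0
  have hprod : ∀ n, K ≤ n → (∏ k ∈ Finset.Ico K n, (1 - lam * α k))
      ≤ Real.exp (-lam * ((∑ k ∈ Finset.range n, α k) - ∑ k ∈ Finset.range K, α k)) := by
    intro n hn
    have h1 : ∀ k ∈ Finset.Ico K n, 1 - lam * α k ≤ Real.exp (-(lam * α k)) := by
      intro k _
      have := Real.add_one_le_exp (-(lam * α k))
      linarith
    have h2 : (∏ k ∈ Finset.Ico K n, (1 - lam * α k))
        ≤ ∏ k ∈ Finset.Ico K n, Real.exp (-(lam * α k)) := by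
      refine Finset.prod_le_prod ?_ h1
      exact fun k hk => (hfac k (le_trans hKK₀ (Finset.mem_Ico.mp hk).1)).1
    rw [← Real.exp_sum] at h2
    refine le_trans h2 (le_of_eq ?_)
    congr 1
    rw [← Finset.sum_Ico_eq_sub _ hn, Finset.mul_sum]
    exact Finset.sum_congr rfl fun k _ => by ring
  have hexp0 : Tendsto (fun n => Real.exp (-lam * ((∑ k ∈ Finset.range n, α k)
      - ∑ k ∈ Finset.range K, α k)) * V K) atTop (nhds 0) := by
    have h1 : Tendsto (fun n => (∑ k ∈ Finset.range n, α k)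
        - ∑ k ∈ Finset.range K, α k) atTop atTop :=
      tendsto_atTop_add_const_right _ _ hα_div
    have h2 : Tendsto (fun n => -lam * ((∑ k ∈ Finset.range n, α k)
        - ∑ k ∈ Finset.range K, α k)) atTop atBot := by
      exact Tendsto.const_mul_atTop_of_neg (neg_neg_iff_pos.mpr hlam) h1
    have h3 := (Real.tendsto_exp_atBot).comp h2
    simpa using h3.mul_const (V K)
  have hev2 : ∀ᶠ n in atTop, Real.exp (-lam * ((∑ k ∈ Finset.range n, α k)
      - ∑ k ∈ Finset.range K, α k)) * V K < ε / 2 :=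
    hexp0.eventually_lt_const (by linarith)
  obtain ⟨K₂, hK₂⟩ := eventually_atTop.mp hev2
  refine ⟨max K K₂, fun n hn => ?_⟩
  have hnK : K ≤ n := le_trans (le_max_left _ _) hn
  have h1 := hbound n hnK
  have h2 : (∏ k ∈ Finset.Ico K n, (1 - lam * α k)) * V K
      ≤ Real.exp (-lam * ((∑ k ∈ Finset.range n, α k)
        - ∑ k ∈ Finset.range K, α k)) * V K :=
    mul_le_mul_of_nonneg_right (hprod n hnK) (hV n |> fun _ => hV K)
  have h3 : M * ∑ k ∈ Finset.Ico K n, (α k) ^ 2 ≤ M * ∑' j, (α (j + K)) ^ 2 :=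
    mul_le_mul_of_nonneg_left (hS n) hM
  have h4 := hK₂ n (le_trans (le_max_right _ _) hn)
  rw [Real.dist_eq, abs_sub_comm, abs_of_nonpos (by linarith [hV n])]
  simp only [neg_sub, sub_zero]
  linarith

set_option maxHeartbeats 1000000 in
/-- Theorem 1 (weak consensus): under the over-the-air consensus protocol with a
connected expected topology and decreasing stepsizes, `E[V(k)] → 0`, and consequently
each agent's expected squared deviation from the current average tends to zero. -/
theorem weak_consensus {N : ℕ} (hN : 2 ≤ N)
    {Ω : Type*} {mΩ : MeasurableSpace Ω} (μ : MeasureTheory.Measure Ω) [MeasureTheory.IsProbabilityMeasure μ]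
    (ℱ : MeasureTheory.Filtration ℕ mΩ)
    (L : Matrix (Fin N) (Fin N) ℝ) (hLsymm : L.IsSymm)
    (hL1 : L.mulVec (fun _ => (1 : ℝ)) = 0)
    (lam : ℝ) (hlam : 0 < lam)
    (hgap : ∀ v : Fin N → ℝ, (∑ i, v i) = 0 →
      lam * (∑ i, (v i) ^ 2) ≤ v ⬝ᵥ L.mulVec v)
    (α : ℕ → ℝ) (hα_pos : ∀ k, 0 < α k)
    (hdiag : ∀ (i : Fin N) (k : ℕ), 0 < 1 - α k * L i i)
    (hα_div : Filter.Tendsto (fun n => ∑ k ∈ Finset.range n, α k) Filter.atTop Filter.atTop)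
    (hα_sq : Summable (fun k => (α k) ^ 2))
    (M : ℝ) (hM : 0 ≤ M)
    (w : ℕ → Ω → Fin N → ℝ)
    (hw_meas : ∀ k, Measurable[ℱ (k + 1)] (w k))
    (hw_L2 : ∀ k, MeasureTheory.MemLp (w k) 2 μ)
    (hw_cond : ∀ k i, μ[(fun ω => w k ω i) | ℱ k] =ᵐ[μ] 0)
    (hw_bound : ∀ k, ∫ ω, (∑ i, (w k ω i) ^ 2) ∂μ ≤ M)
    (x : ℕ → Ω → Fin N → ℝ) (ξ : Fin N → ℝ) (hx0 : ∀ ω, x 0 ω = ξ)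
    (hx_meas : ∀ k, Measurable[ℱ k] (x k))
    (hrec : ∀ k ω, x (k + 1) ω =
      ((1 : Matrix (Fin N) (Fin N) ℝ) - α k • L).mulVec (x k ω) + α k • w k ω) :
    Tendsto (fun k => ∫ ω, ∑ i, (x k ω i - (∑ j, x k ω j) / N) ^ 2 ∂μ)
        atTop (nhds 0) ∧
      ∀ i : Fin N,
        Tendsto (fun k => ∫ ω, (x k ω i - (∑ j, x k ω j) / N) ^ 2 ∂μ)
          atTop (nhds 0) := by
  have hN0 : (N : ℝ) ≠ 0 := Nat.cast_ne_zero.mpr (by omega)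
  -- coordinates of w are in L²
  have hwi2 : ∀ k i, MemLp (fun ω => w k ω i) 2 μ := by
    intro k i
    have := (ContinuousLinearMap.proj (R := ℝ) (φ := fun _ : Fin N => ℝ) i).comp_memLp'
      (hw_L2 k)
    simpa [Function.comp_def] using this
  have hxim : ∀ k i, Measurable[ℱ k] fun ω => x k ω i := fun k i =>
    (measurable_pi_apply i).comp (hx_meas k)
  -- row and column sums of L vanish
  have hrow : ∀ i, ∑ j, L i j = 0 := by
    intro i
    have := congrFun hL1 i
    simpa [Matrix.mulVec, dotProduct] using this
  have hcol : ∀ j, ∑ i, L i j = 0 := by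
    intro j
    rw [← hrow j]
    exact Finset.sum_congr rfl fun i _ => hLsymm.apply j i
  -- coordinatewise recurrence
  have hcoord : ∀ k ω i, x (k + 1) ω i
      = x k ω i - α k * (∑ j, L i j * x k ω j) + α k * w k ω i := by
    intro k ω i
    rw [hrec]
    simp only [Pi.add_apply, Pi.smul_apply, smul_eq_mul, Matrix.mulVec, dotProduct,
      Matrix.sub_apply, Matrix.one_apply, Matrix.smul_apply, sub_mul, ite_mul, one_mul,
      zero_mul, Finset.sum_sub_distrib, Finset.sum_ite_eq, Finset.mem_univ, if_true,
      smul_eq_mul, ← Finset.mul_sum]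
    rw [Finset.mul_sum]
    simp [mul_assoc]
  have hsumx : ∀ k ω, ∑ i, x (k + 1) ω i = (∑ i, x k ω i) + α k * ∑ i, w k ω i := by
    intro k ω
    rw [Finset.sum_congr rfl fun i _ => hcoord k ω i]
    rw [Finset.sum_add_distrib, Finset.sum_sub_distrib, ← Finset.mul_sum, ← Finset.mul_sum]
    have hz : ∑ i, ∑ j, L i j * x k ω j = 0 := by
      rw [Finset.sum_comm]
      have h1 : ∀ j : Fin N, ∑ i, L i j * x k ω j = 0 := fun j => by
        rw [← Finset.sum_mul, hcol, zero_mul]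
      rw [Finset.sum_congr rfl fun j _ => h1 j]
      simp
    rw [hz]
    ring
  -- coordinates of x are in L²
  have hxi2 : ∀ k i, MemLp (fun ω => x k ω i) 2 μ := by
    intro k
    induction k with
    | zero =>
      intro i
      have h : (fun ω => x 0 ω i) = fun _ => ξ i := funext fun ω => by rw [hx0]
      rw [h]
      exact memLp_const _
    | succ k ih =>
      intro i
      have h : (fun ω => x (k + 1) ω i) = fun ω =>
          x k ω i - α k * (∑ j, L i j * x k ω j) + α k * w k ω i :=
        funext fun ω => hcoord k ω i
      rw [h]
      exact ((ih i).sub ((memLp_finset_sum Finset.univ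
        (fun j _ => (ih j).const_mul (L i j))).const_mul (α k))).add
        ((hwi2 k i).const_mul (α k))
  -- the deviation coordinates
  have hu2 : ∀ k i, MemLp (fun ω => x k ω i - (∑ j, x k ω j) / N) 2 μ := by
    intro k i
    have hs : MemLp (fun ω => (N : ℝ)⁻¹ * ∑ j, x k ω j) 2 μ :=
      (memLp_finset_sum Finset.univ fun j _ => hxi2 k j).const_mul _
    have h : (fun ω => x k ω i - (∑ j, x k ω j) / N)
        = fun ω => x k ω i - (N : ℝ)⁻¹ * ∑ j, x k ω j := by
      funext ω; rw [div_eq_inv_mul]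
    rw [h]
    exact (hxi2 k i).sub hs
  have hum : ∀ k i, Measurable[ℱ k] fun ω => x k ω i - (∑ j, x k ω j) / N := by
    intro k i
    exact (hxim k i).sub ((Finset.measurable_sum Finset.univ fun j _ => hxim k j).div_const _)
  have husum0 : ∀ k ω, ∑ i, (x k ω i - (∑ j, x k ω j) / N) = 0 := by
    intro k ω
    rw [Finset.sum_sub_distrib, Finset.sum_const, Finset.card_univ, Fintype.card_fin,
      nsmul_eq_mul]
    field_simp
    simp
  have hVsqInt : ∀ k, Integrable (fun ω => ∑ i, (x k ω i - (∑ j, x k ω j) / N) ^ 2) μ :=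
    fun k => integrable_finset_sum _ fun i _ => (hu2 k i).integrable_sq
  set V : ℕ → ℝ := fun k => ∫ ω, ∑ i, (x k ω i - (∑ j, x k ω j) / N) ^ 2 ∂μ with hVdef
  have hVnonneg : ∀ k, 0 ≤ V k := fun k =>
    integral_nonneg fun ω => Finset.sum_nonneg fun i _ => sq_nonneg _
  set C := ∑ i, ∑ j, (L i j) ^ 2 with hCdef
  have hC0 : 0 ≤ C := Finset.sum_nonneg fun i _ => Finset.sum_nonneg fun j _ => sq_nonneg _
  -- the one-step inequality
  have key : ∀ k, V (k + 1) ≤ (1 - 2 * lam * α k + C * (α k) ^ 2) * V k + (α k) ^ 2 * M := by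
    intro k
    have hid : ∀ ω i, x (k + 1) ω i - (∑ j, x (k + 1) ω j) / N
        = (x k ω i - (∑ j, x k ω j) / N)
          - α k * (∑ j, L i j * (x k ω j - (∑ l, x k ω l) / N))
          + α k * (w k ω i - (∑ j, w k ω j) / N) := by
      intro ω i
      have hLu : ∑ j, L i j * (x k ω j - (∑ l, x k ω l) / N) = ∑ j, L i j * x k ω j := by
        rw [Finset.sum_congr rfl fun j _ => mul_sub (L i j) _ _, Finset.sum_sub_distrib,
          ← Finset.sum_mul, hrow, zero_mul, sub_zero]
      rw [hLu, hcoord k ω i, hsumx k ω]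
      ring
    have hVeq : V (k + 1) = ∫ ω, ∑ i, ((x k ω i - (∑ j, x k ω j) / N)
        - α k * (∑ j, L i j * (x k ω j - (∑ l, x k ω l) / N))
        + α k * (w k ω i - (∑ j, w k ω j) / N)) ^ 2 ∂μ := by
      rw [hVdef]
      refine integral_congr_ae (Eventually.of_forall fun ω => ?_)
      exact Finset.sum_congr rfl fun i _ => by rw [hid ω i]
    rw [hVeq]
    exact one_step hN0 μ (ℱ.le k) L lam hgap (α k) (hα_pos k).le M
      (fun ω i => x k ω i - (∑ j, x k ω j) / N) (w k)
      (hum k) (hu2 k) (hwi2 k) (hw_cond k) (hw_bound k) (husum0 k)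
  have hVlim : Tendsto V atTop (nhds 0) :=
    det_limit lam hlam C M hC0 hM α hα_pos hα_div hα_sq V hVnonneg key
  refine ⟨hVlim, fun i => ?_⟩
  refine squeeze_zero (fun k => integral_nonneg fun ω => sq_nonneg _) (fun k => ?_) hVlim
  refine integral_mono ((hu2 k i).integrable_sq) (hVsqInt k) fun ω => ?_
  exact Finset.single_le_sum (f := fun j => (x k ω j - (∑ l, x k ω l) / N) ^ 2)
    (fun j _ => sq_nonneg _) (Finset.mem_univ i)
end

section
/- Under the stated setting, the multi-agent system achieves mean square average consensus (Theorem 2): there exists a square-integrable random variable x* : Ω → ℝ such that lim_{k→∞} E[(x_i(k) − x*)²] = 0 for every i ∈ {1,…,N}, with E[x*] = (1/N)∑_{i=1}^N x_i(0) and Var(x*) ≤ (M/N)∑_{t=0}^∞ α(t)². -/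
open MeasureTheory Filter Matrix

set_option maxHeartbeats 1000000

section Helpers

variable {Ω : Type*} {mΩ : MeasurableSpace Ω} {μ : MeasureTheory.Measure Ω}

lemma memL2_integrable_mul {g h : Ω → ℝ} (hg : MemLp g 2 μ) (hh : MemLp h 2 μ) :
    Integrable (fun ω => g ω * h ω) μ := by
  refine Integrable.mono' ((hg.integrable_sq.add hh.integrable_sq))
    (hg.aestronglyMeasurable.mul hh.aestronglyMeasurable) ?_
  filter_upwards with ω
  simp only [Pi.add_apply]
  rw [Real.norm_eq_abs, abs_mul]
  nlinarith [sq_abs (g ω), sq_abs (h ω), sq_nonneg (|g ω| - |h ω|), abs_nonneg (g ω),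
    abs_nonneg (h ω)]

lemma lp2_norm_sq (G : Lp ℝ 2 μ) : ‖G‖ ^ 2 = ∫ ω, (G ω) ^ 2 ∂μ := by
  rw [← real_inner_self_eq_norm_sq, MeasureTheory.L2.inner_def]
  apply integral_congr_ae
  filter_upwards with ω
  simp [sq, RCLike.inner_apply, conj_trivial]

lemma tail_tendsto_zero {g : ℕ → ℝ} (hg : Summable g) :
    Tendsto (fun j => ∑' t, g (t + j)) atTop (nhds 0) := by
  have hps := hg.hasSum.tendsto_sum_nat
  have h2 : Tendsto (fun j => (∑' i, g i) - ∑ i ∈ Finset.range j, g i) atTop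
      (nhds ((∑' i, g i) - (∑' i, g i))) := tendsto_const_nhds.sub hps
  simp only [sub_self] at h2
  refine h2.congr fun j => ?_
  have := Summable.sum_add_tsum_nat_add j hg
  linarith [this]

lemma det_V_tendsto_zero (lam : ℝ) (hlam : 0 < lam) (C M : ℝ) (hM : 0 ≤ M)
    (α V : ℕ → ℝ) (hα : ∀ k, 0 < α k) (hV : ∀ k, 0 ≤ V k)
    (hdiv : Tendsto (fun n => ∑ k ∈ Finset.range n, α k) atTop atTop)
    (hsq : Summable fun k => α k ^ 2)
    (hrec : ∀ k, V (k+1) ≤ (1 - 2*lam*α k + C * α k ^ 2) * V k + M * α k ^ 2) :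
    Tendsto V atTop (nhds 0) := by
  have hα0 : Tendsto α atTop (nhds 0) := by
    have h1 := hsq.tendsto_atTop_zero
    have h2 : Tendsto (fun k => Real.sqrt (α k ^ 2)) atTop (nhds (Real.sqrt 0)) :=
      (Real.continuous_sqrt.continuousAt).tendsto.comp h1
    simpa [Real.sqrt_sq (hα _).le] using h2
  have hCev : ∀ᶠ k in atTop, C * α k < lam := by
    have := (hα0.const_mul C)
    simp only [mul_zero] at this
    exact this.eventually_lt_const hlam
  obtain ⟨K, hK⟩ := eventually_atTop.1 hCev
  have hrec2 : ∀ k, K ≤ k → V (k+1) ≤ (1 - lam * α k) * V k + M * α k ^ 2 := by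
    intro k hk
    have h1 : (1 - 2*lam*α k + C * α k ^ 2) ≤ 1 - lam * α k := by
      nlinarith [(hK k hk), (hα k), sq_nonneg (α k)]
    have := mul_le_mul_of_nonneg_right h1 (hV k)
    nlinarith [hrec k]
  set tail : ℕ → ℝ := fun j => ∑' t, α (t + j) ^ 2 with htaildef
  have hsum_shift : ∀ j, Summable fun t => α (t + j) ^ 2 := fun j =>
    (summable_nat_add_iff j).2 hsq
  have htail0 : ∀ j, 0 ≤ tail j := fun j => tsum_nonneg fun t => sq_nonneg _
  have htail_step : ∀ j, tail j = α j ^ 2 + tail (j+1) := by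
    intro j
    have h := Summable.tsum_eq_zero_add (hsum_shift j)
    simp only [zero_add] at h
    rw [htaildef]
    simp only
    rw [h]
    congr 1
    apply tsum_congr
    intro t
    rw [show t + 1 + j = t + (j+1) by omega]
  have htail_tendsto : Tendsto tail atTop (nhds 0) := tail_tendsto_zero hsq
  set T : ℕ → ℝ := fun k => V k + M * tail k with hTdef
  have hT0 : ∀ k, 0 ≤ T k := fun k => add_nonneg (hV k) (mul_nonneg hM (htail0 k))
  have hTstep : ∀ k, K ≤ k → T (k+1) + lam * α k * V k ≤ T k := by
    intro k hk
    have h1 := hrec2 k hk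
    have h2 := htail_step k
    simp only [hTdef]
    nlinarith [h1, h2]
  have hTanti : ∀ k, K ≤ k → T (k+1) ≤ T k := by
    intro k hk
    have := hTstep k hk
    nlinarith [mul_nonneg (mul_nonneg hlam.le (hα k).le) (hV k)]
  have hpartial : ∀ n, (∑ m ∈ Finset.range n, lam * α (K + m) * V (K + m)) ≤ T K - T (K + n) := by
    intro n
    induction n with
    | zero => simp
    | succ n ih =>
      rw [Finset.sum_range_succ]
      have := hTstep (K + n) (Nat.le_add_right _ _)
      have hEq : K + n + 1 = K + (n+1) := by omega
      rw [hEq] at this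
      linarith
  have hsumAV : Summable (fun m => lam * α (K + m) * V (K + m)) := by
    apply summable_of_sum_range_le
    · intro m
      exact mul_nonneg (mul_nonneg hlam.le (hα _).le) (hV _)
    · intro n
      have := hpartial n
      have := hT0 (K + n)
      exact le_trans (by linarith) (le_refl (T K))
  have hganti : Antitone (fun n => T (K + n)) := by
    apply antitone_nat_of_succ_le
    intro n
    have := hTanti (K + n) (Nat.le_add_right _ _)
    rw [show K + n + 1 = K + (n+1) by omega] at this
    exact this
  have hgbdd : BddBelow (Set.range fun n => T (K + n)) :=
    ⟨0, by rintro y ⟨n, rfl⟩; exact hT0 _⟩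
  have hgT : Tendsto (fun n => T (K + n)) atTop (nhds (⨅ n, T (K + n))) :=
    tendsto_atTop_ciInf hganti hgbdd
  set Lv : ℝ := ⨅ n, T (K + n) with hLvdef
  have htail_shift : Tendsto (fun n => tail (K + n)) atTop (nhds 0) := by
    apply htail_tendsto.comp
    simpa [add_comm] using tendsto_add_atTop_nat K
  have hVlim : Tendsto V atTop (nhds Lv) := by
    have h1 : Tendsto (fun n => T (K + n) - M * tail (K + n)) atTop (nhds (Lv - M * 0)) :=
      hgT.sub ((htail_shift.const_mul M))
    simp only [mul_zero, sub_zero] at h1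
    have h2 : Tendsto (fun n => V (n + K)) atTop (nhds Lv) := by
      refine h1.congr fun n => ?_
      simp only [hTdef, add_comm n K]
      ring
    exact (tendsto_add_atTop_iff_nat K).1 h2
  have hLv0 : 0 ≤ Lv := ge_of_tendsto hVlim (Eventually.of_forall hV)
  rcases eq_or_lt_of_le hLv0 with h | h
  · rwa [← h] at hVlim
  · exfalso
    have hev : ∀ᶠ k in atTop, Lv / 2 < V k := hVlim.eventually_const_lt (half_lt_self h)
    obtain ⟨m0, hm0⟩ := eventually_atTop.1 hev
    have hshift : Summable (fun m => lam * α (K + (m + m0)) * V (K + (m + m0))) :=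
      (summable_nat_add_iff m0).2 hsumAV
    have hαsum : Summable (fun m => α (K + (m + m0))) := by
      refine Summable.of_nonneg_of_le (fun m => (hα _).le) ?_ (hshift.mul_left (2 / (lam * Lv)))
      intro m
      have hVge : Lv / 2 < V (K + (m + m0)) := hm0 _ (by omega)
      have hαpos := hα (K + (m + m0))
      rw [div_mul_eq_mul_div, le_div_iff₀ (by positivity)]
      nlinarith [mul_lt_mul_of_pos_left hVge (mul_pos hlam hαpos)]
    have hαsum2 : Summable α := by
      have heq : (fun m => α (K + (m + m0))) = fun m => α (m + (K + m0)) := by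
        funext m; rw [show K + (m + m0) = m + (K + m0) by omega]
      rw [heq] at hαsum
      exact (summable_nat_add_iff (K + m0)).1 hαsum
    exact not_tendsto_atTop_of_tendsto_nhds hαsum2.hasSum.tendsto_sum_nat hdiv

end Helpers


/-- Theorem 2 (mean square average consensus): there is a square-integrable random
variable `x*` with `E[x*] = (1/N) ∑ᵢ xᵢ(0)` and `Var(x*) ≤ (M/N) ∑ₜ α(t)²` such that
every agent's state converges to `x*` in mean square. -/
theorem mean_square_average_consensus {N : ℕ} (hN : 2 ≤ N)
    {Ω : Type*} {mΩ : MeasurableSpace Ω} (μ : MeasureTheory.Measure Ω) [MeasureTheory.IsProbabilityMeasure μ]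
    (ℱ : MeasureTheory.Filtration ℕ mΩ)
    (L : Matrix (Fin N) (Fin N) ℝ) (hLsymm : L.IsSymm)
    (hL1 : L.mulVec (fun _ => (1 : ℝ)) = 0)
    (lam : ℝ) (hlam : 0 < lam)
    (hgap : ∀ v : Fin N → ℝ, (∑ i, v i) = 0 →
      lam * (∑ i, (v i) ^ 2) ≤ v ⬝ᵥ L.mulVec v)
    (α : ℕ → ℝ) (hα_pos : ∀ k, 0 < α k)
    (hdiag : ∀ (i : Fin N) (k : ℕ), 0 < 1 - α k * L i i)
    (hα_div : Filter.Tendsto (fun n => ∑ k ∈ Finset.range n, α k) Filter.atTop Filter.atTop)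
    (hα_sq : Summable (fun k => (α k) ^ 2))
    (M : ℝ) (hM : 0 ≤ M)
    (w : ℕ → Ω → Fin N → ℝ)
    (hw_meas : ∀ k, Measurable[ℱ (k + 1)] (w k))
    (hw_L2 : ∀ k, MeasureTheory.MemLp (w k) 2 μ)
    (hw_cond : ∀ k i, μ[(fun ω => w k ω i) | ℱ k] =ᵐ[μ] 0)
    (hw_bound : ∀ k, ∫ ω, (∑ i, (w k ω i) ^ 2) ∂μ ≤ M)
    (x : ℕ → Ω → Fin N → ℝ) (ξ : Fin N → ℝ) (hx0 : ∀ ω, x 0 ω = ξ)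
    (hx_meas : ∀ k, Measurable[ℱ k] (x k))
    (hrec : ∀ k ω, x (k + 1) ω =
      ((1 : Matrix (Fin N) (Fin N) ℝ) - α k • L).mulVec (x k ω) + α k • w k ω) :
    ∃ xstar : Ω → ℝ, MemLp xstar 2 μ ∧
      (∀ i : Fin N,
        Tendsto (fun k => ∫ ω, (x k ω i - xstar ω) ^ 2 ∂μ) atTop (nhds 0)) ∧
      (∫ ω, xstar ω ∂μ) = (∑ i, ξ i) / N ∧
      ProbabilityTheory.variance xstar μ ≤ (M / N) * ∑' t, (α t) ^ 2 := by
  classical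
  have hNpos : (0:ℝ) < N := by exact_mod_cast Nat.lt_of_lt_of_le (by norm_num) hN
  set c : ℝ := (N : ℝ)⁻¹ with hcdef
  have hcpos : 0 < c := inv_pos.2 hNpos
  have hcN : c * N = 1 := inv_mul_cancel₀ hNpos.ne'
  -- row and column sums of L vanish
  have hrowsum : ∀ i, (∑ j, L i j) = 0 := by
    intro i
    have := congrFun hL1 i
    simpa [Matrix.mulVec, dotProduct] using this
  have hLmul_sum : ∀ v : Fin N → ℝ, (∑ i, ∑ j, L i j * v j) = 0 := by
    intro v
    rw [Finset.sum_comm]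
    have : ∀ j, (∑ i, L i j * v j) = 0 := by
      intro j
      rw [← Finset.sum_mul]
      have hcol : (∑ i, L i j) = 0 := by
        have : (∑ i, L i j) = ∑ i, L j i := by
          apply Finset.sum_congr rfl
          intro i _
          exact hLsymm.apply j i
        rw [this]; exact hrowsum j
      rw [hcol, zero_mul]
    exact Finset.sum_eq_zero fun j _ => this j
  -- componentwise recursion
  have hrecC : ∀ k ω (i : Fin N), x (k+1) ω i
      = x k ω i - α k * (∑ j, L i j * x k ω j) + α k * w k ω i := by
    intro k ω i
    have := congrFun (hrec k ω) i
    rw [this]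
    simp [Matrix.mulVec, dotProduct, Matrix.sub_apply, Matrix.smul_apply,
      Matrix.one_apply, sub_mul, Finset.sum_sub_distrib, Finset.mul_sum, ite_mul,
      smul_eq_mul]
    exact Finset.sum_congr rfl fun j _ => (mul_assoc _ _ _)
  -- components of w are in L2
  have hwC2 : ∀ k (i : Fin N), MemLp (fun ω => w k ω i) 2 μ := by
    intro k i
    refine (hw_L2 k).of_le ?_ ?_
    · exact (((measurable_pi_apply i).comp ((hw_meas k).le (ℱ.le (k+1)))).stronglyMeasurable).aestronglyMeasurable
    · filter_upwards with ω
      exact norm_le_pi_norm (w k ω) i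
  have hwCint : ∀ k (i : Fin N), Integrable (fun ω => w k ω i) μ :=
    fun k i => (hwC2 k i).integrable one_le_two
  -- the key orthogonality property
  have crossZero : ∀ (k : ℕ) (i : Fin N) (g : Ω → ℝ), StronglyMeasurable[ℱ k] g →
      MemLp g 2 μ → ∫ ω, g ω * w k ω i ∂μ = 0 := by
    intro k i g hgsm hg2
    have hint : Integrable (fun ω => g ω * w k ω i) μ := memL2_integrable_mul hg2 (hwC2 k i)
    have h1 : μ[(fun ω => g ω * w k ω i) | ℱ k]
        =ᵐ[μ] g * μ[(fun ω => w k ω i) | ℱ k] :=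
      condExp_mul_of_stronglyMeasurable_left hgsm (by exact hint) (hwCint k i)
    have h2 : (g * μ[(fun ω => w k ω i) | ℱ k] : Ω → ℝ) =ᵐ[μ] 0 := by
      filter_upwards [hw_cond k i] with ω hω
      simp [hω]
    calc ∫ ω, g ω * w k ω i ∂μ
        = ∫ ω, (μ[(fun ω => g ω * w k ω i) | ℱ k]) ω ∂μ := (integral_condExp (ℱ.le k)).symm
      _ = 0 := by rw [integral_congr_ae (h1.trans h2)]; simp

  -- x components: strongly measurable and in L2
  have hxCsm : ∀ k (i : Fin N), StronglyMeasurable[ℱ k] (fun ω => x k ω i) :=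
    fun k i => ((measurable_pi_apply i).comp (hx_meas k)).stronglyMeasurable
  have hxC2 : ∀ k (i : Fin N), MemLp (fun ω => x k ω i) 2 μ := by
    intro k
    induction k with
    | zero =>
      intro i
      have : (fun ω => x 0 ω i) = fun _ => ξ i := funext fun ω => by rw [hx0]
      rw [this]; exact memLp_const _
    | succ k ih =>
      intro i
      have h1 : MemLp (fun ω => ∑ j, L i j * x k ω j) 2 μ :=
        memLp_finset_sum Finset.univ (fun j _ => (ih j).const_mul (L i j))
      have h2 : (fun ω => x (k+1) ω i) = fun ω =>
          (x k ω i - α k * (∑ j, L i j * x k ω j)) + α k * w k ω i :=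
        funext fun ω => hrecC k ω i
      rw [h2]
      exact ((ih i).sub (h1.const_mul (α k))).add ((hwC2 k i).const_mul (α k))
  -- the average process
  set f : ℕ → Ω → ℝ := fun k ω => c * ∑ i, x k ω i with hfdef
  have hfsm : ∀ k, StronglyMeasurable[ℱ k] (f k) := by
    intro k
    exact ((Finset.measurable_sum Finset.univ
      (fun i _ => (measurable_pi_apply i).comp (hx_meas k))).const_mul c).stronglyMeasurable
  have hf2 : ∀ k, MemLp (f k) 2 μ :=
    fun k => (memLp_finset_sum Finset.univ (fun i _ => hxC2 k i)).const_mul c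
  set wbar : ℕ → Ω → ℝ := fun k ω => c * ∑ i, w k ω i with hwbardef
  have hwbar2 : ∀ k, MemLp (wbar k) 2 μ :=
    fun k => (memLp_finset_sum Finset.univ (fun i _ => hwC2 k i)).const_mul c
  have havg : ∀ k ω, f (k+1) ω = f k ω + α k * wbar k ω := by
    intro k ω
    simp only [hfdef, hwbardef]
    rw [Finset.sum_congr rfl (fun i (_ : i ∈ Finset.univ) => hrecC k ω i)]
    rw [Finset.sum_add_distrib, Finset.sum_sub_distrib]
    have hsum1 : (∑ i : Fin N, α k * (∑ j, L i j * x k ω j))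
        = α k * ∑ i : Fin N, ∑ j, L i j * x k ω j := (Finset.mul_sum _ _ _).symm
    have hsum2 : (∑ i : Fin N, α k * w k ω i) = α k * ∑ i : Fin N, w k ω i :=
      (Finset.mul_sum _ _ _).symm
    rw [hsum1, hsum2, hLmul_sum]
    ring
  -- cross products with the average noise vanish
  have hcross_f : ∀ k (g : Ω → ℝ), StronglyMeasurable[ℱ k] g → MemLp g 2 μ →
      ∫ ω, g ω * wbar k ω ∂μ = 0 := by
    intro k g hsm h2
    have hpt : ∀ ω, g ω * wbar k ω = ∑ i, c * (g ω * w k ω i) := by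
      intro ω
      simp only [hwbardef, Finset.mul_sum]
      apply Finset.sum_congr rfl
      intro i _
      ring
    rw [integral_congr_ae (Eventually.of_forall hpt),
      integral_finset_sum _ (fun i _ => (memL2_integrable_mul h2 (hwC2 k i)).const_mul c)]
    apply Finset.sum_eq_zero
    intro i _
    rw [integral_const_mul, crossZero k i g hsm h2, mul_zero]
  have hwbar_zero : ∀ k, ∫ ω, wbar k ω ∂μ = 0 := by
    intro k
    have := hcross_f k (fun _ => 1) stronglyMeasurable_const (memLp_const 1)
    simpa using this
  have hwbarint : ∀ k, Integrable (wbar k) μ := fun k => (hwbar2 k).integrable one_le_two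
  have hfint : ∀ k, Integrable (f k) μ := fun k => (hf2 k).integrable one_le_two
  -- the mean is preserved
  have hmean : ∀ k, ∫ ω, f k ω ∂μ = c * ∑ i, ξ i := by
    intro k
    induction k with
    | zero =>
      have : f 0 = fun _ => c * ∑ i, ξ i := by
        funext ω; simp only [hfdef]; rw [hx0]
      rw [this, integral_const]
      simp
    | succ k ih =>
      have h1 : ∀ ω, f (k+1) ω = f k ω + α k * wbar k ω := havg k
      have hint4 : Integrable (fun ω => α k * wbar k ω) μ := by
        exact (hwbarint k).const_mul (α k)
      rw [integral_congr_ae (Eventually.of_forall h1), integral_add (hfint k) hint4,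
        integral_const_mul (α k) (wbar k), hwbar_zero k, mul_zero, add_zero, ih]
  -- second moment of the average noise
  have hwbar_sq : ∀ k, ∫ ω, (wbar k ω)^2 ∂μ ≤ c * M := by
    intro k
    have hpt : ∀ ω, (wbar k ω)^2 ≤ c * ∑ i, (w k ω i)^2 := by
      intro ω
      have hCS := sq_sum_le_card_mul_sum_sq (s := (Finset.univ : Finset (Fin N)))
        (f := fun i => w k ω i)
      simp only [Finset.card_univ, Fintype.card_fin] at hCS
      have h1 : (wbar k ω)^2 = c^2 * (∑ i, w k ω i)^2 := by simp only [hwbardef]; ring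
      rw [h1]
      calc c^2 * (∑ i, w k ω i)^2 ≤ c^2 * ((N:ℝ) * ∑ i, (w k ω i)^2) := by
            apply mul_le_mul_of_nonneg_left _ (sq_nonneg c)
            exact_mod_cast hCS
        _ = c * ∑ i, (w k ω i)^2 := by
            have : c^2 * ((N:ℝ) * ∑ i, (w k ω i)^2) = (c * (N:ℝ)) * (c * ∑ i, (w k ω i)^2) := by
              ring
            rw [this, hcN, one_mul]
    have hint1 : Integrable (fun ω => (wbar k ω)^2) μ := (hwbar2 k).integrable_sq
    have hint2 : Integrable (fun ω => c * ∑ i, (w k ω i)^2) μ :=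
      (integrable_finset_sum _ (fun i _ => (hwC2 k i).integrable_sq)).const_mul c
    calc ∫ ω, (wbar k ω)^2 ∂μ ≤ ∫ ω, c * ∑ i, (w k ω i)^2 ∂μ := integral_mono hint1 hint2 hpt
      _ = c * ∫ ω, ∑ i, (w k ω i)^2 ∂μ := integral_const_mul c _
      _ ≤ c * M := mul_le_mul_of_nonneg_left (hw_bound k) hcpos.le
  -- second moment of the average is bounded
  have hfsq : ∀ k, ∫ ω, (f k ω)^2 ∂μ
      ≤ (c * ∑ i, ξ i)^2 + (c * M) * ∑ t ∈ Finset.range k, α t ^ 2 := by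
    intro k
    induction k with
    | zero =>
      have : (fun ω => (f 0 ω)^2) = fun _ => (c * ∑ i, ξ i)^2 := by
        funext ω; simp only [hfdef]; rw [hx0]
      rw [this, integral_const]
      simp
    | succ k ih =>
      have hpt : ∀ ω, (f (k+1) ω)^2
          = (f k ω)^2 + (2 * α k) * (f k ω * wbar k ω) + α k^2 * (wbar k ω)^2 := by
        intro ω; rw [havg k ω]; ring
      have hint1 : Integrable (fun ω => (f k ω)^2) μ := (hf2 k).integrable_sq
      have hint2 : Integrable (fun ω => (2 * α k) * (f k ω * wbar k ω)) μ :=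
        (memL2_integrable_mul (hf2 k) (hwbar2 k)).const_mul _
      have hint3 : Integrable (fun ω => α k^2 * (wbar k ω)^2) μ :=
        ((hwbar2 k).integrable_sq).const_mul _
      have hint12 : Integrable
          (fun ω => f k ω ^ 2 + (2 * α k) * (f k ω * wbar k ω)) μ := by
        exact hint1.add hint2
      rw [integral_congr_ae (Eventually.of_forall hpt), integral_add hint12 hint3,
        integral_add hint1 hint2, integral_const_mul (2 * α k) (fun ω => f k ω * wbar k ω),
        integral_const_mul (α k ^ 2) (fun ω => (wbar k ω)^2),
        hcross_f k (f k) (hfsm k) (hf2 k), mul_zero, add_zero, Finset.sum_range_succ]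
      have h3 := mul_le_mul_of_nonneg_left (hwbar_sq k) (sq_nonneg (α k))
      nlinarith [ih]
  -- L2 Cauchy estimate for differences of averages
  have hdiffsq : ∀ j k, j ≤ k → ∫ ω, (f k ω - f j ω)^2 ∂μ
      ≤ (c * M) * ∑ t ∈ Finset.Ico j k, α t ^ 2 := by
    intro j k hjk
    induction k, hjk using Nat.le_induction with
    | base => simp
    | succ k hjk ih =>
      have hpt : ∀ ω, (f (k+1) ω - f j ω)^2
          = (f k ω - f j ω)^2 + (2 * α k) * ((f k ω - f j ω) * wbar k ω)
            + α k^2 * (wbar k ω)^2 := by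
        intro ω; rw [havg k ω]; ring
      have hmemd : MemLp (fun ω => f k ω - f j ω) 2 μ := (hf2 k).sub (hf2 j)
      have hsmd : StronglyMeasurable[ℱ k] (fun ω => f k ω - f j ω) :=
        (hfsm k).sub ((hfsm j).mono (ℱ.mono hjk))
      have hint1 : Integrable (fun ω => (f k ω - f j ω)^2) μ := hmemd.integrable_sq
      have hint2 : Integrable (fun ω => (2 * α k) * ((f k ω - f j ω) * wbar k ω)) μ :=
        (memL2_integrable_mul hmemd (hwbar2 k)).const_mul _
      have hint3 : Integrable (fun ω => α k^2 * (wbar k ω)^2) μ :=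
        ((hwbar2 k).integrable_sq).const_mul _
      have hint12 : Integrable
          (fun ω => (f k ω - f j ω) ^ 2 + (2 * α k) * ((f k ω - f j ω) * wbar k ω)) μ := by
        exact hint1.add hint2
      rw [integral_congr_ae (Eventually.of_forall hpt), integral_add hint12 hint3,
        integral_add hint1 hint2,
        integral_const_mul (2 * α k) (fun ω => (f k ω - f j ω) * wbar k ω),
        integral_const_mul (α k ^ 2) (fun ω => (wbar k ω)^2),
        hcross_f k _ hsmd hmemd, mul_zero, add_zero, Finset.sum_Ico_succ_top hjk]
      have h3 := mul_le_mul_of_nonneg_left (hwbar_sq k) (sq_nonneg (α k))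
      nlinarith [ih]

  -- the Lp elements of the averages
  set F : ℕ → Lp ℝ 2 μ := fun k => (hf2 k).toLp (f k) with hFdef
  have hFnormdiff : ∀ j k : ℕ, ‖F k - F j‖^2 = ∫ ω, (f k ω - f j ω)^2 ∂μ := by
    intro j k
    rw [lp2_norm_sq]
    apply integral_congr_ae
    filter_upwards [Lp.coeFn_sub (F k) (F j), (hf2 k).coeFn_toLp, (hf2 j).coeFn_toLp]
      with ω h1 h2 h3
    rw [h1, Pi.sub_apply, hFdef]
    simp only
    rw [h2, h3]
  have hFnorm : ∀ k : ℕ, ‖F k‖^2 = ∫ ω, (f k ω)^2 ∂μ := by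
    intro k
    rw [lp2_norm_sq]
    apply integral_congr_ae
    filter_upwards [(hf2 k).coeFn_toLp] with ω h2
    simp only [hFdef]
    rw [h2]
  have hsum_shift : ∀ j : ℕ, Summable fun t => α (t + j) ^ 2 := fun j =>
    (summable_nat_add_iff j).2 hα_sq
  have htailnn : ∀ j : ℕ, 0 ≤ ∑' t, α (t + j)^2 := fun j => tsum_nonneg fun t => sq_nonneg _
  have hIco_tail : ∀ (NN q p : ℕ), NN ≤ q → (∑ t ∈ Finset.Ico q p, α t ^ 2)
      ≤ ∑' t, α (t + NN)^2 := by
    intro NN q p hq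
    have h1 : (∑ t ∈ Finset.Ico q p, α t ^ 2) ≤ ∑ t ∈ Finset.Ico NN (max p NN), α t ^ 2 := by
      apply Finset.sum_le_sum_of_subset_of_nonneg
      · apply Finset.Ico_subset_Ico hq (le_max_left _ _)
      · intro t _ _; exact sq_nonneg _
    have h2 : (∑ t ∈ Finset.Ico NN (max p NN), α t ^ 2)
        = ∑ t ∈ Finset.range (max p NN - NN), α (t + NN) ^ 2 := by
      rw [Finset.sum_Ico_eq_sum_range]
      apply Finset.sum_congr rfl
      intro t _
      rw [show NN + t = t + NN by omega]
    have h3 : (∑ t ∈ Finset.range (max p NN - NN), α (t + NN) ^ 2) ≤ ∑' t, α (t + NN)^2 :=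
      Summable.sum_le_tsum _ (fun t _ => sq_nonneg _) (hsum_shift NN)
    linarith
  have hcauchy : CauchySeq F := by
    apply cauchySeq_of_le_tendsto_0 (b := fun n => Real.sqrt ((c * M) * ∑' t, α (t + n)^2))
    · have key : ∀ (NN p q : ℕ), NN ≤ p → NN ≤ q → q ≤ p →
          dist (F p) (F q) ≤ Real.sqrt ((c * M) * ∑' t, α (t + NN)^2) := by
        intro NN p q hp hq hqp
        rw [dist_eq_norm]
        have hA : 0 ≤ (c * M) * ∑' t, α (t + NN)^2 :=
          mul_nonneg (mul_nonneg hcpos.le hM) (htailnn NN)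
        have h1 : ‖F p - F q‖^2 ≤ (c * M) * ∑' t, α (t + NN)^2 := by
          rw [hFnormdiff q p]
          calc ∫ ω, (f p ω - f q ω)^2 ∂μ ≤ (c * M) * ∑ t ∈ Finset.Ico q p, α t ^ 2 :=
                hdiffsq q p hqp
            _ ≤ (c * M) * ∑' t, α (t + NN)^2 :=
                mul_le_mul_of_nonneg_left (hIco_tail NN q p hq) (mul_nonneg hcpos.le hM)
        rw [← Real.sqrt_sq (norm_nonneg (F p - F q))]
        exact Real.sqrt_le_sqrt h1
      intro n m NN hn hm
      rcases le_total m n with h | h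
      · exact key NN n m hn hm h
      · rw [dist_comm]; exact key NN m n hm hn h
    · have h1 := tail_tendsto_zero (g := fun t => α t ^ 2) hα_sq
      have h2 : Tendsto (fun n => (c * M) * ∑' t, α (t + n)^2) atTop (nhds ((c*M) * 0)) :=
        h1.const_mul (c*M)
      rw [mul_zero] at h2
      have h3 := (Real.continuous_sqrt.continuousAt (x := (0:ℝ))).tendsto.comp h2
      simpa [Real.sqrt_zero, Function.comp_def] using h3

  -- the limit
  obtain ⟨X, hXlim⟩ := cauchySeq_tendsto_of_complete hcauchy
  have hX2 : MemLp (fun ω => X ω) 2 μ := Lp.memLp X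
  have hXint : Integrable (fun ω => X ω) μ := hX2.integrable one_le_two
  have hQeq : ∀ k, ∫ ω, (f k ω - X ω)^2 ∂μ = ‖F k - X‖^2 := by
    intro k
    rw [lp2_norm_sq]
    apply integral_congr_ae
    symm
    filter_upwards [Lp.coeFn_sub (F k) X, (hf2 k).coeFn_toLp] with ω h1 h2
    rw [h1, Pi.sub_apply]
    simp only [hFdef]
    rw [h2]
  have hQ0 : Tendsto (fun k => ‖F k - X‖^2) atTop (nhds 0) := by
    have h1 : Tendsto (fun k => F k - X) atTop (nhds (X - X)) := hXlim.sub tendsto_const_nhds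
    rw [sub_self] at h1
    have h2 := h1.norm
    rw [norm_zero] at h2
    have h3 := h2.pow 2
    simpa using h3
  -- the disagreement process
  set V : ℕ → ℝ := fun k => ∫ ω, ∑ i, (x k ω i - f k ω)^2 ∂μ with hVdef
  have heC2 : ∀ k (i : Fin N), MemLp (fun ω => x k ω i - f k ω) 2 μ :=
    fun k i => (hxC2 k i).sub (hf2 k)
  have heSM : ∀ k (i : Fin N), StronglyMeasurable[ℱ k] (fun ω => x k ω i - f k ω) :=
    fun k i => (hxCsm k i).sub (hfsm k)
  have heIntSq : ∀ k, Integrable (fun ω => ∑ i, (x k ω i - f k ω)^2) μ :=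
    fun k => integrable_finset_sum _ (fun i _ => (heC2 k i).integrable_sq)
  have hV0 : ∀ k, 0 ≤ V k :=
    fun k => integral_nonneg fun ω => Finset.sum_nonneg fun i _ => sq_nonneg _
  have hesum0 : ∀ k ω, (∑ i, (x k ω i - f k ω)) = 0 := by
    intro k ω
    rw [Finset.sum_sub_distrib, Finset.sum_const, Finset.card_univ, Fintype.card_fin,
      nsmul_eq_mul]
    have h1 : (N:ℝ) * f k ω = (c * (N:ℝ)) * ∑ i, x k ω i := by
      simp only [hfdef]; ring
    rw [h1, hcN, one_mul, sub_self]
  set C : ℝ := ∑ i, ∑ j, (L i j)^2 with hCdef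
  have hBpt : ∀ (a : ℝ), 0 ≤ a → ∀ v : Fin N → ℝ, (∑ i, v i) = 0 →
      (∑ i, (v i - a * ∑ j, L i j * v j)^2) ≤ (1 - 2*lam*a + C*a^2) * ∑ i, (v i)^2 := by
    intro a ha v hv
    have hexp : (∑ i, (v i - a * ∑ j, L i j * v j)^2)
        = ∑ i, (v i)^2 - (2*a) * (∑ i, v i * ∑ j, L i j * v j)
          + a^2 * ∑ i, (∑ j, L i j * v j)^2 := by
      rw [Finset.mul_sum, Finset.mul_sum, ← Finset.sum_sub_distrib, ← Finset.sum_add_distrib]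
      apply Finset.sum_congr rfl
      intro i _
      ring
    have hdot : (∑ i, v i * ∑ j, L i j * v j) = v ⬝ᵥ L.mulVec v := by
      simp [dotProduct, Matrix.mulVec]
    have hgap' := hgap v hv
    have hCS : (∑ i, (∑ j, L i j * v j)^2) ≤ C * ∑ j, (v j)^2 := by
      have h1 : ∀ i : Fin N, (∑ j, L i j * v j)^2 ≤ (∑ j, (L i j)^2) * ∑ j, (v j)^2 :=
        fun i => Finset.sum_mul_sq_le_sq_mul_sq _ _ _
      calc (∑ i, (∑ j, L i j * v j)^2) ≤ ∑ i, ((∑ j, (L i j)^2) * ∑ j, (v j)^2) :=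
            Finset.sum_le_sum (fun i _ => h1 i)
        _ = C * ∑ j, (v j)^2 := by rw [hCdef, ← Finset.sum_mul]
    rw [hexp, hdot]
    nlinarith [mul_le_mul_of_nonneg_left hgap' (by positivity : (0:ℝ) ≤ 2*a),
      mul_le_mul_of_nonneg_left hCS (sq_nonneg a)]
  -- the disagreement recursion
  have hVrec : ∀ k, V (k+1) ≤ (1 - 2*lam*α k + C * α k ^ 2) * V k + M * α k ^ 2 := by
    intro k
    set G : Fin N → Ω → ℝ :=
      fun i ω => (x k ω i - f k ω) - α k * ∑ j, L i j * (x k ω j - f k ω) with hGdef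
    set D : Fin N → Ω → ℝ := fun i ω => w k ω i - wbar k ω with hDdef
    have hG2 : ∀ i, MemLp (G i) 2 μ := fun i =>
      (heC2 k i).sub ((memLp_finset_sum Finset.univ
        (fun j _ => (heC2 k j).const_mul (L i j))).const_mul (α k))
    have hGsm : ∀ i, StronglyMeasurable[ℱ k] (G i) := fun i =>
      (heSM k i).sub (((Finset.stronglyMeasurable_fun_sum Finset.univ
        (fun j _ => (heSM k j).const_mul (L i j)))).const_mul (α k))
    have hD2 : ∀ i, MemLp (D i) 2 μ := fun i => (hwC2 k i).sub (hwbar2 k)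
    have hpt : ∀ ω (i : Fin N), x (k+1) ω i - f (k+1) ω = G i ω + α k * D i ω := by
      intro ω i
      rw [hrecC k ω i, havg k ω]
      simp only [hGdef, hDdef]
      have h1 : (∑ j, L i j * (x k ω j - f k ω))
          = (∑ j, L i j * x k ω j) - (∑ j, L i j) * f k ω := by
        rw [Finset.sum_mul]
        rw [← Finset.sum_sub_distrib]
        apply Finset.sum_congr rfl
        intro j _
        ring
      rw [h1, hrowsum i]
      ring
    have hexp_pt : ∀ ω, (∑ i, (x (k+1) ω i - f (k+1) ω)^2)
        = (∑ i, (G i ω)^2) + ((2 * α k) * ∑ i, G i ω * D i ω)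
          + (α k^2 * ∑ i, (D i ω)^2) := by
      intro ω
      rw [Finset.sum_congr rfl (fun i (_ : i ∈ Finset.univ) => by rw [hpt ω i])]
      rw [Finset.mul_sum, Finset.mul_sum, ← Finset.sum_add_distrib, ← Finset.sum_add_distrib]
      apply Finset.sum_congr rfl
      intro i _
      ring
    have hintG2 : Integrable (fun ω => ∑ i, (G i ω)^2) μ :=
      integrable_finset_sum _ (fun i _ => (hG2 i).integrable_sq)
    have hintGD : Integrable (fun ω => ∑ i, G i ω * D i ω) μ :=
      integrable_finset_sum _ (fun i _ => memL2_integrable_mul (hG2 i) (hD2 i))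
    have hintD2 : Integrable (fun ω => ∑ i, (D i ω)^2) μ :=
      integrable_finset_sum _ (fun i _ => (hD2 i).integrable_sq)
    have hint12 : Integrable
        (fun ω => (∑ i, (G i ω)^2) + (2 * α k) * ∑ i, G i ω * D i ω) μ := by
      exact hintG2.add (hintGD.const_mul _)
    have hsplit : V (k+1) = (∫ ω, ∑ i, (G i ω)^2 ∂μ)
        + ((2 * α k) * ∫ ω, ∑ i, G i ω * D i ω ∂μ)
        + (α k^2 * ∫ ω, ∑ i, (D i ω)^2 ∂μ) := by
      simp only [hVdef]
      rw [integral_congr_ae (Eventually.of_forall hexp_pt), integral_add hint12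
        (hintD2.const_mul _), integral_add hintG2 (hintGD.const_mul _),
        integral_const_mul (2 * α k) (fun ω => ∑ i, G i ω * D i ω),
        integral_const_mul (α k^2) (fun ω => ∑ i, (D i ω)^2)]
    have hcross : ∫ ω, ∑ i, G i ω * D i ω ∂μ = 0 := by
      rw [integral_finset_sum _ (fun i _ => memL2_integrable_mul (hG2 i) (hD2 i))]
      apply Finset.sum_eq_zero
      intro i _
      have h1 : ∫ ω, G i ω * D i ω ∂μ
          = (∫ ω, G i ω * w k ω i ∂μ) - ∫ ω, G i ω * wbar k ω ∂μ := by
        rw [← integral_sub (memL2_integrable_mul (hG2 i) (hwC2 k i))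
          (memL2_integrable_mul (hG2 i) (hwbar2 k))]
        apply integral_congr_ae
        filter_upwards with ω
        simp only [hDdef]
        ring
      rw [h1, crossZero k i (G i) (hGsm i) (hG2 i), hcross_f k (G i) (hGsm i) (hG2 i),
        sub_zero]
    have hDbound : ∫ ω, ∑ i, (D i ω)^2 ∂μ ≤ M := by
      have hpt2 : ∀ ω, (∑ i, (D i ω)^2) ≤ ∑ i, (w k ω i)^2 := by
        intro ω
        have hs : (∑ i, w k ω i) = (N:ℝ) * wbar k ω := by
          simp only [hwbardef]
          rw [← mul_assoc]
          have : (N:ℝ) * c = 1 := by rw [mul_comm]; exact hcN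
          rw [this, one_mul]
        have hexp2 : (∑ i, (D i ω)^2)
            = ∑ i, (w k ω i)^2 - (2 * wbar k ω) * (∑ i, w k ω i)
              + (N:ℝ) * (wbar k ω)^2 := by
          simp only [hDdef]
          rw [Finset.mul_sum, ← Finset.sum_sub_distrib]
          have : ((N:ℝ) * (wbar k ω)^2)
              = ∑ _i : Fin N, (wbar k ω)^2 := by
            rw [Finset.sum_const, Finset.card_univ, Fintype.card_fin, nsmul_eq_mul]
          rw [this, ← Finset.sum_add_distrib]
          apply Finset.sum_congr rfl
          intro i _
          ring
        rw [hexp2, hs]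
        nlinarith [sq_nonneg (wbar k ω), hNpos]
      calc ∫ ω, ∑ i, (D i ω)^2 ∂μ ≤ ∫ ω, ∑ i, (w k ω i)^2 ∂μ :=
            integral_mono hintD2 (integrable_finset_sum _
              (fun i _ => (hwC2 k i).integrable_sq)) hpt2
        _ ≤ M := hw_bound k
    have hGbound : ∫ ω, ∑ i, (G i ω)^2 ∂μ
        ≤ (1 - 2*lam*α k + C * α k ^ 2) * V k := by
      have hpt3 : ∀ ω, (∑ i, (G i ω)^2)
          ≤ (1 - 2*lam*α k + C * α k ^ 2) * ∑ i, (x k ω i - f k ω)^2 := by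
        intro ω
        exact hBpt (α k) (hα_pos k).le (fun i => x k ω i - f k ω) (hesum0 k ω)
      calc ∫ ω, ∑ i, (G i ω)^2 ∂μ
          ≤ ∫ ω, (1 - 2*lam*α k + C * α k ^ 2) * ∑ i, (x k ω i - f k ω)^2 ∂μ :=
            integral_mono hintG2 ((heIntSq k).const_mul _) hpt3
        _ = (1 - 2*lam*α k + C * α k ^ 2) * V k := by
            rw [integral_const_mul ((1 - 2*lam*α k + C * α k ^ 2))
              (fun ω => ∑ i, (x k ω i - f k ω)^2)]
    rw [hsplit, hcross, mul_zero, add_zero]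
    have h5 := mul_le_mul_of_nonneg_left hDbound (sq_nonneg (α k))
    nlinarith [hGbound]
  have hVtends : Tendsto V atTop (nhds 0) :=
    det_V_tendsto_zero lam hlam C M hM α V hα_pos hV0 hα_div hα_sq hVrec
  -- the mean of the limit
  have hXmean : ∫ ω, X ω ∂μ = c * ∑ i, ξ i := by
    set d : ℝ := (∫ ω, X ω ∂μ) - c * ∑ i, ξ i with hddef
    have hdk : ∀ k, d^2 ≤ ‖F k - X‖^2 := by
      intro k
      have hmemd : MemLp (fun ω => X ω - f k ω) 2 μ := hX2.sub (hf2 k)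
      have h0 := ProbabilityTheory.variance_nonneg (fun ω => X ω - f k ω) μ
      rw [ProbabilityTheory.variance_eq_sub hmemd] at h0
      have h1 : ∫ ω, ((fun ω => X ω - f k ω)^2) ω ∂μ = ∫ ω, (f k ω - X ω)^2 ∂μ := by
        apply integral_congr_ae
        filter_upwards with ω
        simp only [Pi.pow_apply]
        ring
      have h2 : ∫ ω, (X ω - f k ω) ∂μ = d := by
        rw [integral_sub hXint (hfint k), hmean k, hddef]
      rw [h1, h2, hQeq k] at h0
      linarith
    have h3 : d^2 ≤ 0 := ge_of_tendsto hQ0 (Eventually.of_forall hdk)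
    have h4 : d = 0 := by nlinarith [sq_nonneg d]
    rw [hddef] at h4
    linarith [h4]
  refine ⟨fun ω => X ω, hX2, ?_, ?_, ?_⟩
  · -- mean square convergence of each component
    intro i
    have hub : ∀ k, ∫ ω, (x k ω i - X ω)^2 ∂μ ≤ 2 * V k + 2 * ‖F k - X‖^2 := by
      intro k
      have hmem1 : MemLp (fun ω => x k ω i - X ω) 2 μ := (hxC2 k i).sub hX2
      have hint1 : Integrable (fun ω => (x k ω i - X ω)^2) μ := hmem1.integrable_sq
      have hintfX : Integrable (fun ω => (f k ω - X ω)^2) μ :=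
        ((hf2 k).sub hX2).integrable_sq
      have hinta : Integrable (fun ω => 2 * ((x k ω i - f k ω)^2)) μ :=
        ((heC2 k i).integrable_sq).const_mul 2
      have hintb : Integrable (fun ω => 2 * ((f k ω - X ω)^2)) μ := hintfX.const_mul 2
      have hint2 : Integrable
          (fun ω => 2 * ((x k ω i - f k ω)^2) + 2 * ((f k ω - X ω)^2)) μ := by
        exact hinta.add hintb
      have hpt : ∀ ω, (x k ω i - X ω)^2
          ≤ 2 * ((x k ω i - f k ω)^2) + 2 * ((f k ω - X ω)^2) := by
        intro ω
        nlinarith [sq_nonneg ((x k ω i - f k ω) - (f k ω - X ω))]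
      have h1 := integral_mono hint1 hint2 hpt
      have h2 : ∫ ω, (2 * ((x k ω i - f k ω)^2) + 2 * ((f k ω - X ω)^2)) ∂μ
          = 2 * (∫ ω, (x k ω i - f k ω)^2 ∂μ) + 2 * ∫ ω, (f k ω - X ω)^2 ∂μ := by
        rw [integral_add hinta hintb, integral_const_mul 2 (fun ω => (x k ω i - f k ω)^2),
          integral_const_mul 2 (fun ω => (f k ω - X ω)^2)]
      have h3 : ∫ ω, (x k ω i - f k ω)^2 ∂μ ≤ V k := by
        simp only [hVdef]
        apply integral_mono ((heC2 k i).integrable_sq) (heIntSq k)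
        intro ω
        exact Finset.single_le_sum (f := fun j => (x k ω j - f k ω)^2)
          (fun j _ => sq_nonneg _) (Finset.mem_univ i)
      have h4 := hQeq k
      linarith
    apply squeeze_zero (fun k => integral_nonneg fun ω => sq_nonneg _) hub
    have := (hVtends.const_mul 2).add (hQ0.const_mul 2)
    simpa using this
  · -- the mean
    rw [hXmean, hcdef, inv_mul_eq_div]
  · -- the variance bound
    rw [ProbabilityTheory.variance_eq_sub hX2]
    have h1 : ∫ ω, ((fun ω => X ω)^2) ω ∂μ = ‖X‖^2 := by
      rw [lp2_norm_sq]
      apply integral_congr_ae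
      filter_upwards with ω
      simp [Pi.pow_apply]
    have hlim2 : Tendsto (fun k => ‖F k‖^2) atTop (nhds (‖X‖^2)) := hXlim.norm.pow 2
    have hband : ∀ k, ‖F k‖^2 ≤ (c * ∑ i, ξ i)^2 + (c * M) * ∑' t, α t ^ 2 := by
      intro k
      rw [hFnorm k]
      refine le_trans (hfsq k) ?_
      have h5 : (∑ t ∈ Finset.range k, α t ^ 2) ≤ ∑' t, α t ^ 2 :=
        Summable.sum_le_tsum _ (fun t _ => sq_nonneg _) hα_sq
      have h6 := mul_le_mul_of_nonneg_left h5 (mul_nonneg hcpos.le hM)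
      linarith
    have hXnorm : ‖X‖^2 ≤ (c * ∑ i, ξ i)^2 + (c * M) * ∑' t, α t ^ 2 :=
      le_of_tendsto hlim2 (Eventually.of_forall hband)
    have h7 : ∫ ω, X ω ∂μ = c * ∑ i, ξ i := hXmean
    have h8 : c * M = M / N := by rw [hcdef]; ring
    have h9 : (c * M) * ∑' t, α t ^ 2 = (M / N) * ∑' t, α t ^ 2 := by rw [h8]
    rw [h1, h7]
    linarith [hXnorm, h9]
end
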